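/- arXiv:2002.05318 — 9 statements merged into one kernel-verified Lean document; each statement's English description precedes it below -/
import Mathlib

section
/- Let m > 0 and λ > 0, and let f : ℝ^d → ℝ be continuous and m-strongly convex. Define g : ℝ^d → ℝ by g(x) := inf_{y ∈ ℝ^d} [ f(y) + (λ/2)‖y − x‖² ]. Then g is (λm/(λ + m))-strongly convex, i.e., for all x₁, x₂ ∈ ℝ^d and all θ ∈ (0, 1), g(θx₁ + (1 − θ)x₂) ≤ θ·g(x₁) + (1 − θ)·g(x₂) − (λm/(2(λ + m)))·θ(1 − θ)·‖x₁ − x₂‖². -/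
lemma combo_norm_sq {E : Type*} [NormedAddCommGroup E] [InnerProductSpace ℝ E]
    (a b : E) (θ : ℝ) :
    ‖θ • a + (1 - θ) • b‖ ^ 2
      = θ * ‖a‖ ^ 2 + (1 - θ) * ‖b‖ ^ 2 - θ * (1 - θ) * ‖a - b‖ ^ 2 := by
  have h1 := @norm_add_sq_real E _ _ (θ • a) ((1 - θ) • b)
  have h2 := @norm_sub_sq_real E _ _ a b
  have ha : ‖θ • a‖ ^ 2 = θ ^ 2 * ‖a‖ ^ 2 := by
    rw [norm_smul, mul_pow, Real.norm_eq_abs, sq_abs]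
  have hb : ‖(1 - θ) • b‖ ^ 2 = (1 - θ) ^ 2 * ‖b‖ ^ 2 := by
    rw [norm_smul, mul_pow, Real.norm_eq_abs, sq_abs]
  have hi : (inner ℝ (θ • a) ((1 - θ) • b) : ℝ) = θ * ((1 - θ) * inner ℝ a b) := by
    rw [real_inner_smul_left, real_inner_smul_right]
  rw [ha, hb, hi] at h1
  linear_combination h1 + θ * (1 - θ) * h2

/-- A continuous strongly convex function has a "quadratic minus linear" lower bound. -/
lemma strong_lower (d : ℕ) (m : ℝ) (hm : 0 < m)
    (f : EuclideanSpace ℝ (Fin d) → ℝ) (hcont : Continuous f)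
    (hconv : ConvexOn ℝ Set.univ (fun x => f x - m / 2 * ‖x‖ ^ 2)) :
    ∃ M : ℝ, 0 ≤ M ∧ ∀ z, f z ≥ m / 2 * ‖z‖ ^ 2 - M * (2 * ‖z‖ + 1) := by
  have hhc : Continuous (fun x : EuclideanSpace ℝ (Fin d) => f x - m / 2 * ‖x‖ ^ 2) := by
    apply hcont.sub
    continuity
  obtain ⟨M, hM⟩ := (isCompact_closedBall (0 : EuclideanSpace ℝ (Fin d))
    1).exists_bound_of_continuousOn hhc.continuousOn
  simp only [Real.norm_eq_abs] at hM
  have hM0 : 0 ≤ M :=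
    le_trans (abs_nonneg (f 0 - m / 2 * ‖(0 : EuclideanSpace ℝ (Fin d))‖ ^ 2)) (hM 0 (by simp))
  refine ⟨M, hM0, fun z => ?_⟩
  rcases le_or_gt ‖z‖ 1 with hz | hz
  · have h1 := abs_le.mp (hM z (by simpa [Metric.mem_closedBall] using hz))
    nlinarith [norm_nonneg z, h1.1]
  · have hz0 : 0 < ‖z‖ := by linarith
    set t : ℝ := 1 / ‖z‖ with ht
    have ht0 : 0 < t := by positivity
    have ht1 : t ≤ 1 := by
      rw [ht, div_le_one hz0]; linarith
    have hw : ‖t • z‖ = 1 := by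
      rw [norm_smul, Real.norm_eq_abs, abs_of_pos ht0, ht]
      field_simp
    have hcv := hconv.2 (Set.mem_univ (0 : EuclideanSpace ℝ (Fin d))) (Set.mem_univ z)
      (by linarith : (0:ℝ) ≤ 1 - t) (le_of_lt ht0) (by ring)
    simp only [smul_zero, zero_add, smul_eq_mul] at hcv
    have hwb := abs_le.mp (hM (t • z) (by simp [Metric.mem_closedBall, hw]))
    have h0b := abs_le.mp (hM 0 (by simp))
    -- hcv : f (t • z) - m/2 * ‖t • z‖^2 ≤ (1-t)*(f 0 - ...) + t*(f z - m/2*‖z‖^2)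
    have hge : -2 * M ≤ t * (f z - m / 2 * ‖z‖ ^ 2) := by
      have hle : (1 - t) * (f 0 - m / 2 * ‖(0 : EuclideanSpace ℝ (Fin d))‖ ^ 2)
          ≤ (1 - t) * M :=
        mul_le_mul_of_nonneg_left h0b.2 (by linarith)
      have hlow : -M ≤ f (t • z) - m / 2 * ‖t • z‖ ^ 2 := hwb.1
      nlinarith [hcv, hle, hlow, hM0, ht1, ht0.le]
    have htz : t * ‖z‖ = 1 := by
      rw [ht]; field_simp
    have hprod : (-2 * M) * ‖z‖ ≤ (t * (f z - m / 2 * ‖z‖ ^ 2)) * ‖z‖ :=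
      mul_le_mul_of_nonneg_right hge (norm_nonneg z)
    have heq : (t * (f z - m / 2 * ‖z‖ ^ 2)) * ‖z‖ = f z - m / 2 * ‖z‖ ^ 2 := by
      linear_combination (f z - m / 2 * ‖z‖ ^ 2) * htz
    nlinarith [hprod, heq, hM0, hz0.le]

set_option maxHeartbeats 1000000 in
/-- the Moreau-type envelope `g(x) = inf_y [f(y) + (λ/2)‖y − x‖²]` of a
continuous `m`-strongly convex function `f` is `λm/(λ+m)`-strongly convex. -/
theorem stmt7 (d : ℕ) (hd : 1 ≤ d) (m lam : ℝ) (hm : 0 < m) (hlam : 0 < lam)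
    (f : EuclideanSpace ℝ (Fin d) → ℝ)
    (hcont : Continuous f)
    (hconv : ConvexOn ℝ Set.univ (fun x => f x - m / 2 * ‖x‖ ^ 2))
    (g : EuclideanSpace ℝ (Fin d) → ℝ)
    (hg : ∀ x, g x = ⨅ z : EuclideanSpace ℝ (Fin d), (f z + lam / 2 * ‖z - x‖ ^ 2)) :
    ∀ x₁ x₂ : EuclideanSpace ℝ (Fin d), ∀ θ : ℝ, 0 < θ → θ < 1 →
      g (θ • x₁ + (1 - θ) • x₂)
        ≤ θ * g x₁ + (1 - θ) * g x₂
          - lam * m / (2 * (lam + m)) * (θ * (1 - θ)) * ‖x₁ - x₂‖ ^ 2 := by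
  intro x₁ x₂ θ hθ0 hθ1
  obtain ⟨M, hM0, hMlb⟩ := strong_lower d m hm f hcont hconv
  have hbdd : ∀ x : EuclideanSpace ℝ (Fin d),
      BddBelow (Set.range fun z => f z + lam / 2 * ‖z - x‖ ^ 2) := by
    intro x
    refine ⟨-(2 * M ^ 2 / m) - M, ?_⟩
    rintro _ ⟨z, rfl⟩
    have h1 := hMlb z
    have h2 : (0:ℝ) ≤ lam / 2 * ‖z - x‖ ^ 2 := by positivity
    have h4 : 2 * M ^ 2 / m * m = 2 * M ^ 2 := by field_simp
    nlinarith [sq_nonneg (m * ‖z‖ - 2 * M), hm, norm_nonneg z, hM0]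
  have hθ'0 : 0 < 1 - θ := by linarith
  set K := lam * m / (2 * (lam + m)) with hK
  have hK0 : 0 ≤ K := by rw [hK]; positivity
  set xθ := θ • x₁ + (1 - θ) • x₂ with hxθ
  -- key pointwise inequality
  have key : ∀ y₁ y₂ : EuclideanSpace ℝ (Fin d),
      g xθ + K * (θ * (1 - θ)) * ‖x₁ - x₂‖ ^ 2
        ≤ θ * (f y₁ + lam / 2 * ‖y₁ - x₁‖ ^ 2)
            + (1 - θ) * (f y₂ + lam / 2 * ‖y₂ - x₂‖ ^ 2) := by
    intro y₁ y₂
    set yθ := θ • y₁ + (1 - θ) • y₂ with hyθ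
    have step1 : g xθ ≤ f yθ + lam / 2 * ‖yθ - xθ‖ ^ 2 := by
      rw [hg xθ]
      exact ciInf_le (hbdd xθ) yθ
    have hcv := hconv.2 (Set.mem_univ y₁) (Set.mem_univ y₂) hθ0.le hθ'0.le (by ring)
    simp only [smul_eq_mul] at hcv
    rw [← hyθ] at hcv
    have hn1 : ‖yθ‖ ^ 2 = θ * ‖y₁‖ ^ 2 + (1 - θ) * ‖y₂‖ ^ 2 - θ * (1 - θ) * ‖y₁ - y₂‖ ^ 2 := by
      rw [hyθ]; exact combo_norm_sq y₁ y₂ θ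
    have hn1' : m / 2 * ‖yθ‖ ^ 2
        = m / 2 * θ * ‖y₁‖ ^ 2 + m / 2 * (1 - θ) * ‖y₂‖ ^ 2
            - m / 2 * (θ * (1 - θ)) * ‖y₁ - y₂‖ ^ 2 := by
      linear_combination (m / 2) * hn1
    have step2 : f yθ ≤ θ * f y₁ + (1 - θ) * f y₂
        - m / 2 * (θ * (1 - θ)) * ‖y₁ - y₂‖ ^ 2 := by
      linarith [hcv, hn1']
    have hvec : yθ - xθ = θ • (y₁ - x₁) + (1 - θ) • (y₂ - x₂) := by
      rw [hyθ, hxθ]; module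
    have hn2 : ‖yθ - xθ‖ ^ 2
        = θ * ‖y₁ - x₁‖ ^ 2 + (1 - θ) * ‖y₂ - x₂‖ ^ 2
            - θ * (1 - θ) * ‖(y₁ - x₁) - (y₂ - x₂)‖ ^ 2 := by
      rw [hvec]; exact combo_norm_sq (y₁ - x₁) (y₂ - x₂) θ
    have hn2' : lam / 2 * ‖yθ - xθ‖ ^ 2
        = lam / 2 * θ * ‖y₁ - x₁‖ ^ 2 + lam / 2 * (1 - θ) * ‖y₂ - x₂‖ ^ 2
            - lam / 2 * (θ * (1 - θ)) * ‖(y₁ - x₁) - (y₂ - x₂)‖ ^ 2 := by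
      linear_combination (lam / 2) * hn2
    have htri : ‖x₁ - x₂‖ ≤ ‖y₁ - y₂‖ + ‖(y₁ - x₁) - (y₂ - x₂)‖ := by
      have h : x₁ - x₂ = (y₁ - y₂) - ((y₁ - x₁) - (y₂ - x₂)) := by abel
      rw [h]
      exact norm_sub_le _ _
    have hmin : K * ‖x₁ - x₂‖ ^ 2
        ≤ m / 2 * ‖y₁ - y₂‖ ^ 2 + lam / 2 * ‖(y₁ - x₁) - (y₂ - x₂)‖ ^ 2 := by
      set a := ‖y₁ - y₂‖
      set b := ‖(y₁ - x₁) - (y₂ - x₂)‖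
      set c := ‖x₁ - x₂‖
      have ha0 : 0 ≤ a := norm_nonneg _
      have hb0 : 0 ≤ b := norm_nonneg _
      have hc0 : 0 ≤ c := norm_nonneg _
      have hsq : c ^ 2 ≤ (a + b) ^ 2 := by nlinarith
      have hKle : K * c ^ 2 ≤ K * (a + b) ^ 2 := mul_le_mul_of_nonneg_left hsq hK0
      have h2 : K * (a + b) ^ 2 ≤ m / 2 * a ^ 2 + lam / 2 * b ^ 2 := by
        rw [hK, div_mul_eq_mul_div, div_le_iff₀ (by linarith : (0:ℝ) < 2 * (lam + m))]
        nlinarith [sq_nonneg (m * a - lam * b)]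
      linarith
    have hmin' : (θ * (1 - θ)) * (K * ‖x₁ - x₂‖ ^ 2)
        ≤ (θ * (1 - θ)) * (m / 2 * ‖y₁ - y₂‖ ^ 2
            + lam / 2 * ‖(y₁ - x₁) - (y₂ - x₂)‖ ^ 2) :=
      mul_le_mul_of_nonneg_left hmin (by positivity)
    nlinarith [step1, step2, hn2', hmin']
  -- take infima in y₂ then y₁
  have step3 : ∀ y₁ : EuclideanSpace ℝ (Fin d),
      g xθ + K * (θ * (1 - θ)) * ‖x₁ - x₂‖ ^ 2
        ≤ θ * (f y₁ + lam / 2 * ‖y₁ - x₁‖ ^ 2) + (1 - θ) * g x₂ := by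
    intro y₁
    have h2 : (g xθ + K * (θ * (1 - θ)) * ‖x₁ - x₂‖ ^ 2
        - θ * (f y₁ + lam / 2 * ‖y₁ - x₁‖ ^ 2)) / (1 - θ) ≤ g x₂ := by
      rw [hg x₂]
      refine le_ciInf fun y₂ => ?_
      rw [div_le_iff₀ hθ'0]
      linarith [key y₁ y₂]
    rw [div_le_iff₀ hθ'0] at h2
    linarith [h2]
  have step4 : g xθ + K * (θ * (1 - θ)) * ‖x₁ - x₂‖ ^ 2
      ≤ θ * g x₁ + (1 - θ) * g x₂ := by
    have h2 : (g xθ + K * (θ * (1 - θ)) * ‖x₁ - x₂‖ ^ 2 - (1 - θ) * g x₂) / θ ≤ g x₁ := by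
      rw [hg x₁]
      refine le_ciInf fun y₁ => ?_
      rw [div_le_iff₀ hθ0]
      linarith [step3 y₁]
    rw [div_le_iff₀ hθ0] at h2
    linarith [h2]
  linarith [step4]
end

section
/- Let f : ℝ^d → ℝ be convex, nonnegative, and l-strongly smooth (l > 0). Then for all x, y ∈ ℝ^d and every η > 0, f(y) ≤ (1 + η)·f(x) + (1 + 1/η)·(l/2)·‖x − y‖². -/
open RealInnerProductSpace

/-- if `f` is convex, nonnegative and `l`-strongly smooth, then
`f(y) ≤ (1 + η)f(x) + (1 + 1/η)(l/2)‖x − y‖²` for all `x, y` and `η > 0`. -/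
theorem stmt8 (d : ℕ) (hd : 1 ≤ d) (l : ℝ) (hl : 0 < l)
    (f : EuclideanSpace ℝ (Fin d) → ℝ)
    (hconv : ConvexOn ℝ Set.univ f)
    (hnonneg : ∀ x, 0 ≤ f x)
    (hdiff : Differentiable ℝ f)
    (hsmooth : ∀ x y, f y ≤ f x + fderiv ℝ f x (y - x) + l / 2 * ‖y - x‖ ^ 2) :
    ∀ x y : EuclideanSpace ℝ (Fin d), ∀ η : ℝ, 0 < η →
      f y ≤ (1 + η) * f x + (1 + 1 / η) * (l / 2) * ‖x - y‖ ^ 2 := by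
  intro x y η hη
  set g := (InnerProductSpace.toDual ℝ (EuclideanSpace ℝ (Fin d))).symm (fderiv ℝ f x) with hgdef
  have hg : ∀ v, fderiv ℝ f x v = ⟪g, v⟫ := by
    intro v
    rw [hgdef, ← InnerProductSpace.toDual_symm_apply]
  have hl' : l ≠ 0 := ne_of_gt hl
  have hη' : η ≠ 0 := ne_of_gt hη
  -- self-bounding: ‖g‖² ≤ 2 l f x
  have hsb : ‖g‖ ^ 2 ≤ 2 * l * f x := by
    have h := hsmooth x (x - l⁻¹ • g)
    have h1 : (x - l⁻¹ • g) - x = -(l⁻¹ • g) := by abel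
    rw [h1, hg] at h
    have h2 : ⟪g, -(l⁻¹ • g)⟫ = -(‖g‖ ^ 2 / l) := by
      rw [inner_neg_right, inner_smul_right, real_inner_self_eq_norm_sq]
      field_simp
    have h3 : l / 2 * ‖-(l⁻¹ • g)‖ ^ 2 = ‖g‖ ^ 2 / (2 * l) := by
      rw [norm_neg, norm_smul, mul_pow]
      rw [Real.norm_eq_abs, abs_of_pos (inv_pos.mpr hl)]
      field_simp
    rw [h2] at h
    have h0 := hnonneg (x - l⁻¹ • g)
    have h4 : 0 ≤ f x + -(‖g‖ ^ 2 / l) + ‖g‖ ^ 2 / (2 * l) := by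
      calc (0:ℝ) ≤ f (x - l⁻¹ • g) := h0
        _ ≤ f x + -(‖g‖ ^ 2 / l) + l / 2 * ‖-(l⁻¹ • g)‖ ^ 2 := h
        _ = f x + -(‖g‖ ^ 2 / l) + ‖g‖ ^ 2 / (2 * l) := by rw [h3]
    have h5 : ‖g‖ ^ 2 / (2 * l) ≤ f x := by
      have : -(‖g‖ ^ 2 / l) + ‖g‖ ^ 2 / (2 * l) = -(‖g‖ ^ 2 / (2 * l)) := by
        field_simp; ring
      linarith [h4, this]
    calc ‖g‖ ^ 2 = ‖g‖ ^ 2 / (2 * l) * (2 * l) := by field_simp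
      _ ≤ f x * (2 * l) := by
          apply mul_le_mul_of_nonneg_right h5 (by positivity)
      _ = 2 * l * f x := by ring
  have hmain := hsmooth x y
  rw [hg] at hmain
  have hip : ⟪g, y - x⟫ ≤ ‖g‖ * ‖y - x‖ := real_inner_le_norm g (y - x)
  have hxy : ‖x - y‖ = ‖y - x‖ := norm_sub_rev x y
  rw [hxy]
  have hfx := hnonneg x
  have key' : 2 * η * (‖g‖ * ‖y - x‖) ≤ 2 * η ^ 2 * f x + l * ‖y - x‖ ^ 2 := by
    nlinarith [sq_nonneg (η * ‖g‖ - l * ‖y - x‖),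
      mul_le_mul_of_nonneg_left hsb (sq_nonneg η), hl, hη, mul_pos hl hη]
  have key : ‖g‖ * ‖y - x‖ ≤ η * f x + l / (2 * η) * ‖y - x‖ ^ 2 := by
    rw [← sub_nonneg]
    have heq : η * f x + l / (2 * η) * ‖y - x‖ ^ 2 - ‖g‖ * ‖y - x‖ =
        (2 * η ^ 2 * f x + l * ‖y - x‖ ^ 2 - 2 * η * (‖g‖ * ‖y - x‖)) / (2 * η) := by
      field_simp
    rw [heq]
    exact div_nonneg (by linarith) (by positivity)
  have hexp : (1 + 1 / η) * (l / 2) = l / 2 + l / (2 * η) := by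
    field_simp
  rw [hexp]
  nlinarith [sq_nonneg ‖y - x‖]
end

section
/- Let m > 0, λ ≥ 0, and let f : ℝ^d → ℝ be m-strongly convex. Fix s, ζ ∈ ℝ^d. Let ŷ be a global minimizer of y ↦ f(y) + (λ/2)‖y − s‖², and let y′ be a global minimizer of y ↦ f(y + ζ) + (λ/2)‖y − s‖². Then ‖y′ − ŷ‖ ≤ 2‖ζ‖. -/
open RealInnerProductSpace

section Aux
variable {E : Type*} [NormedAddCommGroup E] [InnerProductSpace ℝ E]

lemma aux_norm_combo (a z : E) (t : ℝ) :
    ‖(1 - t) • a + t • z‖ ^ 2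
      = (1 - t) * ‖a‖ ^ 2 + t * ‖z‖ ^ 2 - t * (1 - t) * ‖z - a‖ ^ 2 := by
  have h : ∀ x : E, ‖x‖ ^ 2 = ⟪x, x⟫ := fun x => (real_inner_self_eq_norm_sq x).symm
  simp only [h, inner_add_add_self, inner_sub_sub_self, real_inner_smul_left,
    real_inner_smul_right, real_inner_comm z a]
  ring

lemma aux_affine (lam : ℝ) (c : E) :
    ConvexOn ℝ Set.univ (fun x : E => lam / 2 * ‖x - c‖ ^ 2 - lam / 2 * ‖x‖ ^ 2) := by
  refine ⟨convex_univ, fun x _ y _ p q hp hq hpq => le_of_eq ?_⟩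
  have hq' : q = 1 - p := by linarith
  subst hq'
  have h : ∀ v : E, ‖v‖ ^ 2 = ⟪v, v⟫ := fun v => (real_inner_self_eq_norm_sq v).symm
  simp only [smul_eq_mul, h, inner_sub_sub_self, inner_add_add_self, inner_add_left,
    inner_add_right, real_inner_smul_left, real_inner_smul_right, real_inner_comm y x,
    real_inner_comm c x, real_inner_comm c y]
  ring

lemma aux_growth (M : ℝ) (hM : 0 < M) (g : E → ℝ)
    (hc : ConvexOn ℝ Set.univ (fun x => g x - M / 2 * ‖x‖ ^ 2))
    (a : E) (ha : ∀ z, g a ≤ g z) (z : E) :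
    g a + M / 2 * ‖z - a‖ ^ 2 ≤ g z := by
  have key : ∀ t ∈ Set.Ioo (0:ℝ) 1, M / 2 * ((1 - t) * ‖z - a‖ ^ 2) ≤ g z - g a := by
    intro t ht
    obtain ⟨ht0, ht1⟩ := ht
    have hcc := hc.2 (Set.mem_univ a) (Set.mem_univ z)
      (by linarith : (0:ℝ) ≤ 1 - t) ht0.le (by ring)
    simp only [smul_eq_mul] at hcc
    rw [aux_norm_combo a z t] at hcc
    have hmin := ha ((1 - t) • a + t • z)
    have h1 : t * (M / 2 * ((1 - t) * ‖z - a‖ ^ 2)) ≤ t * (g z - g a) := by nlinarith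
    exact le_of_mul_le_mul_left h1 ht0
  have hlim : Filter.Tendsto (fun t : ℝ => M / 2 * ((1 - t) * ‖z - a‖ ^ 2))
      (nhdsWithin 0 (Set.Ioi 0)) (nhds (M / 2 * ((1 - 0) * ‖z - a‖ ^ 2))) :=
    (Continuous.tendsto (by continuity) 0).mono_left nhdsWithin_le_nhds
  have hfin : M / 2 * ((1 - 0) * ‖z - a‖ ^ 2) ≤ g z - g a := by
    refine le_of_tendsto hlim ?_
    filter_upwards [Ioo_mem_nhdsGT_of_mem (by norm_num : (0:ℝ) ∈ Set.Ico 0 1)] with t ht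
      using key t ht
  linarith [hfin]

end Aux

/-- stability of the ROBD minimizer under translation of the hitting cost:
if `ŷ` minimizes `y ↦ f(y) + (λ/2)‖y − s‖²` and `y′` minimizes
`y ↦ f(y + ζ) + (λ/2)‖y − s‖²`, then `‖y′ − ŷ‖ ≤ 2‖ζ‖`. -/
theorem stmt9 (d : ℕ) (hd : 1 ≤ d) (m lam : ℝ) (hm : 0 < m) (hlam : 0 ≤ lam)
    (f : EuclideanSpace ℝ (Fin d) → ℝ)
    (hconv : ConvexOn ℝ Set.univ (fun x => f x - m / 2 * ‖x‖ ^ 2))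
    (s ζ yhat y' : EuclideanSpace ℝ (Fin d))
    (hyhat : ∀ z, f yhat + lam / 2 * ‖yhat - s‖ ^ 2 ≤ f z + lam / 2 * ‖z - s‖ ^ 2)
    (hy' : ∀ z, f (y' + ζ) + lam / 2 * ‖y' - s‖ ^ 2 ≤ f (z + ζ) + lam / 2 * ‖z - s‖ ^ 2) :
    ‖y' - yhat‖ ≤ 2 * ‖ζ‖ := by
  set u : EuclideanSpace ℝ (Fin d) := y' + ζ with hu_def
  set g1 : EuclideanSpace ℝ (Fin d) → ℝ := fun x => f x + lam / 2 * ‖x - s‖ ^ 2 with hg1_def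
  set g2 : EuclideanSpace ℝ (Fin d) → ℝ :=
    fun x => f x + lam / 2 * ‖x - (s + ζ)‖ ^ 2 with hg2_def
  have hM : (0:ℝ) < m + lam := by linarith
  have hc1 : ConvexOn ℝ Set.univ (fun x => g1 x - (m + lam) / 2 * ‖x‖ ^ 2) := by
    have h := hconv.add (aux_affine lam s)
    have he : (fun x => g1 x - (m + lam) / 2 * ‖x‖ ^ 2)
        = ((fun x => f x - m / 2 * ‖x‖ ^ 2)
            + fun x : EuclideanSpace ℝ (Fin d) => lam / 2 * ‖x - s‖ ^ 2 - lam / 2 * ‖x‖ ^ 2) := by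
      funext x; simp only [Pi.add_apply, hg1_def]; ring
    rw [he]; exact h
  have hc2 : ConvexOn ℝ Set.univ (fun x => g2 x - (m + lam) / 2 * ‖x‖ ^ 2) := by
    have h := hconv.add (aux_affine lam (s + ζ))
    have he : (fun x => g2 x - (m + lam) / 2 * ‖x‖ ^ 2)
        = ((fun x => f x - m / 2 * ‖x‖ ^ 2)
            + fun x : EuclideanSpace ℝ (Fin d) =>
                lam / 2 * ‖x - (s + ζ)‖ ^ 2 - lam / 2 * ‖x‖ ^ 2) := by
      funext x; simp only [Pi.add_apply, hg2_def]; ring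
    rw [he]; exact h
  have hmin1 : ∀ z, g1 yhat ≤ g1 z := hyhat
  have hmin2 : ∀ z, g2 u ≤ g2 z := by
    intro z
    have h := hy' (z - ζ)
    have e1 : u - (s + ζ) = y' - s := by simp only [hu_def]; abel
    have e2 : z - ζ + ζ = z := by abel
    have e3 : z - (s + ζ) = z - ζ - s := by abel
    simp only [hg2_def, e1, e3]
    rw [e2] at h
    exact h
  have A := aux_growth (m + lam) hM g1 hc1 yhat hmin1 u
  have B := aux_growth (m + lam) hM g2 hc2 u hmin2 yhat
  have hdiff : (g1 u - g1 yhat) + (g2 yhat - g2 u) = lam * ⟪u - yhat, ζ⟫ := by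
    simp only [hg1_def, hg2_def]
    have e1 : u - (s + ζ) = (u - s) - ζ := by abel
    have e2 : yhat - (s + ζ) = (yhat - s) - ζ := by abel
    rw [e1, e2, norm_sub_sq_real (u - s) ζ, norm_sub_sq_real (yhat - s) ζ]
    have e3 : ⟪u - yhat, ζ⟫ = ⟪u - s, ζ⟫ - ⟪yhat - s, ζ⟫ := by
      rw [← inner_sub_left]; congr 1; abel
    rw [e3]; ring
  have hnr : ‖yhat - u‖ = ‖u - yhat‖ := norm_sub_rev _ _
  have hsum : (m + lam) * ‖u - yhat‖ ^ 2 ≤ lam * ⟪u - yhat, ζ⟫ := by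
    rw [hnr] at B
    have h2 : (m + lam) * ‖u - yhat‖ ^ 2
        = (m + lam) / 2 * ‖u - yhat‖ ^ 2 + (m + lam) / 2 * ‖u - yhat‖ ^ 2 := by ring
    rw [h2, ← hdiff]
    linarith [A, B]
  have hinner : ⟪u - yhat, ζ⟫ ≤ ‖u - yhat‖ * ‖ζ‖ := real_inner_le_norm _ _
  have hub : ‖u - yhat‖ ≤ ‖ζ‖ := by
    rcases eq_or_lt_of_le (norm_nonneg (u - yhat)) with h0 | h0
    · rw [← h0]; exact norm_nonneg _
    · nlinarith [mul_le_mul_of_nonneg_left hinner hlam, mul_pos hM h0,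
        mul_nonneg h0.le (norm_nonneg ζ)]
  have e4 : y' - yhat = (u - yhat) - ζ := by simp only [hu_def]; abel
  calc ‖y' - yhat‖ = ‖(u - yhat) - ζ‖ := by rw [e4]
    _ ≤ ‖u - yhat‖ + ‖ζ‖ := norm_sub_le _ _
    _ ≤ ‖ζ‖ + ‖ζ‖ := by linarith
    _ = 2 * ‖ζ‖ := by ring
end

section
/- Let m > 0 and α ≥ 1. For each n ≥ 0 define a_n := 2·inf { Σ_{i=1}^n (m/2)·y_i² + Σ_{i=1}^{n+1} (1/2)·(y_i − α·y_{i−1})² : y_0, y_1, …, y_{n+1} ∈ ℝ, y_0 = 0, y_{n+1} = 1 }. Then the sequence (a_n) converges, and lim_{n→∞} a_n = (−m − α² + 1 + √((m + α² − 1)² + 4m)) / 2. -/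
/-- The sequence `a_n`: twice the minimal cost of moving from `y_0 = 0` to `y_{n+1} = 1`
with hitting costs `(m/2)y_i²` (for `1 ≤ i ≤ n`) and switching costs
`(1/2)(y_i − α y_{i−1})²` (for `1 ≤ i ≤ n + 1`). -/
noncomputable def aSeq (m α : ℝ) (n : ℕ) : ℝ :=
  2 * sInf { r : ℝ | ∃ y : ℕ → ℝ, y 0 = 0 ∧ y (n + 1) = 1 ∧
    r = ∑ i ∈ Finset.Icc 1 n, m / 2 * (y i) ^ 2
      + ∑ i ∈ Finset.Icc 1 (n + 1), 1 / 2 * (y i - α * y (i - 1)) ^ 2 }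

/-- The DP recursion. -/
noncomputable def cSeq (m α : ℝ) : ℕ → ℝ
  | 0 => 1
  | n + 1 => (cSeq m α n + m) / (cSeq m α n + m + α ^ 2)

/-- The cost functional. -/
noncomputable def cost (m α : ℝ) (n : ℕ) (y : ℕ → ℝ) : ℝ :=
  ∑ i ∈ Finset.Icc 1 n, m / 2 * (y i) ^ 2
    + ∑ i ∈ Finset.Icc 1 (n + 1), 1 / 2 * (y i - α * y (i - 1)) ^ 2

lemma cSeq_pos (m α : ℝ) (hm : 0 < m) (hα : 1 ≤ α) (n : ℕ) : 0 < cSeq m α n := by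
  induction n with
  | zero => norm_num [cSeq]
  | succ n ih =>
      have h1 : (0:ℝ) < α ^ 2 := by nlinarith
      exact div_pos (by linarith) (by linarith)

lemma cSeq_le_one (m α : ℝ) (hm : 0 < m) (hα : 1 ≤ α) (n : ℕ) : cSeq m α n ≤ 1 := by
  cases n with
  | zero => norm_num [cSeq]
  | succ n =>
      have h1 : (0:ℝ) < α ^ 2 := by nlinarith
      have h2 := cSeq_pos m α hm hα n
      rw [cSeq, div_le_one (by linarith)]
      linarith

/-- The key pointwise inequality (value of the one-step DP minimization). -/
lemma key_ineq (α A z w : ℝ) (hA : 0 ≤ A) (hα : 1 ≤ α) :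
    A / (A + α ^ 2) / 2 * w ^ 2 ≤ A / 2 * z ^ 2 + 1 / 2 * (w - α * z) ^ 2 := by
  have hα2 : (0:ℝ) < α ^ 2 := by nlinarith
  have hpos : (0:ℝ) < A + α ^ 2 := by linarith
  have key : A * w ^ 2 ≤ (A + α ^ 2) * (A * z ^ 2 + (w - α * z) ^ 2) := by
    nlinarith [sq_nonneg ((A + α ^ 2) * z - α * w)]
  rw [div_div, div_mul_eq_mul_div, div_le_iff₀ (by positivity)]
  nlinarith [key]

/-- The equality version at the optimal point. -/
lemma key_eq (α A w : ℝ) (hA : 0 < A + α ^ 2) :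
    A / 2 * (α * w / (A + α ^ 2)) ^ 2 + 1 / 2 * (w - α * (α * w / (A + α ^ 2))) ^ 2
      = A / (A + α ^ 2) / 2 * w ^ 2 := by
  field_simp
  ring

/-- Lower bound: any admissible sequence has cost at least `cSeq n / 2 · y(n+1)²`. -/
lemma cost_lower (m α : ℝ) (hm : 0 < m) (hα : 1 ≤ α) (n : ℕ) (y : ℕ → ℝ) (h0 : y 0 = 0) :
    cSeq m α n / 2 * (y (n + 1)) ^ 2 ≤ cost m α n y := by
  induction n with
  | zero =>
      simp [cost, cSeq, h0]
  | succ n ih =>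
      have hc := cSeq_pos m α hm hα n
      have hsum1 : ∑ i ∈ Finset.Icc 1 (n + 1), m / 2 * (y i) ^ 2
          = (∑ i ∈ Finset.Icc 1 n, m / 2 * (y i) ^ 2) + m / 2 * (y (n + 1)) ^ 2 :=
        Finset.sum_Icc_succ_top (by omega) _
      have hsum2 : ∑ i ∈ Finset.Icc 1 (n + 2), 1 / 2 * (y i - α * y (i - 1)) ^ 2
          = (∑ i ∈ Finset.Icc 1 (n + 1), 1 / 2 * (y i - α * y (i - 1)) ^ 2)
            + 1 / 2 * (y (n + 2) - α * y (n + 1)) ^ 2 :=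
        Finset.sum_Icc_succ_top (by omega) _
      have hexp : cost m α (n + 1) y
          = cost m α n y + m / 2 * (y (n + 1)) ^ 2
            + 1 / 2 * (y (n + 2) - α * y (n + 1)) ^ 2 := by
        simp only [cost]
        rw [hsum1, hsum2]
        ring
      have hkey := key_ineq α (cSeq m α n + m) (y (n + 1)) (y (n + 2))
        (by linarith) hα
      have hc1 : cSeq m α (n + 1) = (cSeq m α n + m) / (cSeq m α n + m + α ^ 2) := rfl
      rw [hexp, hc1]
      calc (cSeq m α n + m) / (cSeq m α n + m + α ^ 2) / 2 * (y (n + 1 + 1)) ^ 2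
          ≤ (cSeq m α n + m) / 2 * (y (n + 1)) ^ 2
              + 1 / 2 * (y (n + 2) - α * y (n + 1)) ^ 2 := by
            simpa using hkey
        _ ≤ cost m α n y + m / 2 * (y (n + 1)) ^ 2
              + 1 / 2 * (y (n + 2) - α * y (n + 1)) ^ 2 := by
            nlinarith [ih]

/-- Upper bound: there is an admissible sequence with cost exactly `cSeq n / 2`. -/
lemma cost_witness (m α : ℝ) (hm : 0 < m) (hα : 1 ≤ α) (n : ℕ) :
    ∃ y : ℕ → ℝ, y 0 = 0 ∧ y (n + 1) = 1 ∧ cost m α n y = cSeq m α n / 2 := by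
  induction n with
  | zero =>
      refine ⟨fun i => if i = 0 then 0 else 1, by simp, by simp, ?_⟩
      simp [cost, cSeq]
  | succ n ih =>
      obtain ⟨y, h0, h1, hcost⟩ := ih
      have hc := cSeq_pos m α hm hα n
      have hα2 : (0:ℝ) < α ^ 2 := by nlinarith
      have hpos : (0:ℝ) < cSeq m α n + m + α ^ 2 := by linarith
      set A : ℝ := cSeq m α n + m with hA
      set t : ℝ := α / (A + α ^ 2) with ht
      refine ⟨fun i => if i = n + 2 then 1 else t * y i, by simp [h0], by simp, ?_⟩
      have hs1 : ∑ i ∈ Finset.Icc 1 (n + 1),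
            m / 2 * ((if i = n + 2 then 1 else t * y i) : ℝ) ^ 2
          = (∑ i ∈ Finset.Icc 1 n, m / 2 * (t * y i) ^ 2) + m / 2 * t ^ 2 := by
        rw [Finset.sum_Icc_succ_top (by omega)]
        congr 1
        · refine Finset.sum_congr rfl fun i hi => ?_
          have : i ≠ n + 2 := by simp only [Finset.mem_Icc] at hi; omega
          rw [if_neg this]
        · rw [if_neg (by omega), h1, mul_one]
      have hs2 : ∑ i ∈ Finset.Icc 1 (n + 2),
            1 / 2 * (((if i = n + 2 then 1 else t * y i) : ℝ)
              - α * (if i - 1 = n + 2 then 1 else t * y (i - 1))) ^ 2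
          = (∑ i ∈ Finset.Icc 1 (n + 1), 1 / 2 * (t * y i - α * (t * y (i - 1))) ^ 2)
            + 1 / 2 * (1 - α * t) ^ 2 := by
        rw [Finset.sum_Icc_succ_top (by omega)]
        congr 1
        · refine Finset.sum_congr rfl fun i hi => ?_
          simp only [Finset.mem_Icc] at hi
          rw [if_neg (by omega), if_neg (by omega)]
        · have e : n + 1 + 1 - 1 = n + 1 := by omega
          rw [if_pos rfl, e, if_neg (by omega : ¬ n + 1 = n + 2), h1, mul_one]
      have hexp : cost m α (n + 1) (fun i => if i = n + 2 then 1 else t * y i)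
          = t ^ 2 * cost m α n y + m / 2 * t ^ 2 + 1 / 2 * (1 - α * t) ^ 2 := by
        simp only [cost]
        rw [hs1, hs2]
        have e1 : ∀ i : ℕ, m / 2 * (t * y i) ^ 2 = t ^ 2 * (m / 2 * (y i) ^ 2) := by
          intro i; ring
        have e2 : ∀ i : ℕ, 1 / 2 * (t * y i - α * (t * y (i - 1))) ^ 2
            = t ^ 2 * (1 / 2 * (y i - α * y (i - 1)) ^ 2) := by
          intro i; ring
        simp only [e1, e2, ← Finset.mul_sum]
        ring
      rw [hexp, hcost]
      have := key_eq α A 1 (by rw [hA]; linarith)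
      have hc1 : cSeq m α (n + 1) = A / (A + α ^ 2) := rfl
      rw [hc1]
      have ht1 : t = α * 1 / (A + α ^ 2) := by rw [ht]; ring
      calc t ^ 2 * (cSeq m α n / 2) + m / 2 * t ^ 2 + 1 / 2 * (1 - α * t) ^ 2
          = A / 2 * (α * 1 / (A + α ^ 2)) ^ 2
            + 1 / 2 * (1 - α * (α * 1 / (A + α ^ 2))) ^ 2 := by
            rw [← ht1, hA]; ring
        _ = A / (A + α ^ 2) / 2 * 1 ^ 2 := this
        _ = A / (A + α ^ 2) / 2 := by ring

/-- Computation of `aSeq`. -/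
lemma aSeq_eq (m α : ℝ) (hm : 0 < m) (hα : 1 ≤ α) (n : ℕ) :
    aSeq m α n = cSeq m α n := by
  obtain ⟨y, h0, h1, hcost⟩ := cost_witness m α hm hα n
  have hmem : cSeq m α n / 2 ∈ { r : ℝ | ∃ y : ℕ → ℝ, y 0 = 0 ∧ y (n + 1) = 1 ∧
      r = ∑ i ∈ Finset.Icc 1 n, m / 2 * (y i) ^ 2
        + ∑ i ∈ Finset.Icc 1 (n + 1), 1 / 2 * (y i - α * y (i - 1)) ^ 2 } :=
    ⟨y, h0, h1, hcost.symm⟩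
  have hlb : ∀ r ∈ { r : ℝ | ∃ y : ℕ → ℝ, y 0 = 0 ∧ y (n + 1) = 1 ∧
      r = ∑ i ∈ Finset.Icc 1 n, m / 2 * (y i) ^ 2
        + ∑ i ∈ Finset.Icc 1 (n + 1), 1 / 2 * (y i - α * y (i - 1)) ^ 2 },
      cSeq m α n / 2 ≤ r := by
    rintro r ⟨z, hz0, hz1, rfl⟩
    have := cost_lower m α hm hα n z hz0
    rw [hz1] at this
    simpa [cost] using this
  have : sInf { r : ℝ | ∃ y : ℕ → ℝ, y 0 = 0 ∧ y (n + 1) = 1 ∧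
      r = ∑ i ∈ Finset.Icc 1 n, m / 2 * (y i) ^ 2
        + ∑ i ∈ Finset.Icc 1 (n + 1), 1 / 2 * (y i - α * y (i - 1)) ^ 2 }
      = cSeq m α n / 2 :=
    le_antisymm (csInf_le ⟨cSeq m α n / 2, hlb⟩ hmem) (le_csInf ⟨_, hmem⟩ hlb)
  rw [aSeq, this]
  ring

/-- the sequence `a_n` converges to
`(−m − α² + 1 + √((m + α² − 1)² + 4m)) / 2`. -/
theorem stmt10 (m α : ℝ) (hm : 0 < m) (hα : 1 ≤ α) :
    Filter.Tendsto (aSeq m α) Filter.atTop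
      (nhds ((-m - α ^ 2 + 1 + Real.sqrt ((m + α ^ 2 - 1) ^ 2 + 4 * m)) / 2)) := by
  have hα2 : (0:ℝ) < α ^ 2 := by nlinarith
  have hα21 : (1:ℝ) ≤ α ^ 2 := by nlinarith
  set R : ℝ := Real.sqrt ((m + α ^ 2 - 1) ^ 2 + 4 * m) with hR
  set L : ℝ := (-m - α ^ 2 + 1 + R) / 2 with hL
  have hR2 : R ^ 2 = (m + α ^ 2 - 1) ^ 2 + 4 * m := Real.sq_sqrt (by positivity)
  have hRpos : 0 ≤ R := Real.sqrt_nonneg _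
  have hs0 : 0 < m + α ^ 2 - 1 := by linarith
  have hLroot : L ^ 2 + (m + α ^ 2 - 1) * L - m = 0 := by
    rw [hL]; linear_combination hR2 / 4
  have hLpos : 0 < L := by
    have hRgt : m + α ^ 2 - 1 < R := by nlinarith [hR2, hRpos, hs0]
    rw [hL]; linarith
  have hd2 : (0:ℝ) < L + m + α ^ 2 := by linarith
  have hLfix : (L + m) / (L + m + α ^ 2) = L := by
    rw [div_eq_iff (ne_of_gt hd2)]
    linear_combination (-1 : ℝ) * hLroot
  set q : ℝ := α ^ 2 / (m + α ^ 2) ^ 2 with hq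
  have hq0 : 0 ≤ q := by positivity
  have hq1 : q < 1 := by
    rw [hq, div_lt_one (by positivity)]
    nlinarith [sq_nonneg m, mul_pos hm hα2,
      mul_le_mul_of_nonneg_left hα21 (le_of_lt hα2)]
  -- contraction step
  have hstep : ∀ x : ℝ, 0 < x →
      |(x + m) / (x + m + α ^ 2) - L| ≤ q * |x - L| := by
    intro x hx
    have hd1 : (0:ℝ) < x + m + α ^ 2 := by linarith
    have hdiff : (x + m) / (x + m + α ^ 2) - L
        = α ^ 2 * (x - L) / ((x + m + α ^ 2) * (L + m + α ^ 2)) := by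
      have h' : (x + m) / (x + m + α ^ 2) - (L + m) / (L + m + α ^ 2)
          = α ^ 2 * (x - L) / ((x + m + α ^ 2) * (L + m + α ^ 2)) := by
        field_simp
        ring
      rw [hLfix] at h'
      exact h'
    rw [hdiff, abs_div, abs_mul, abs_of_pos (mul_pos hd1 hd2), abs_of_pos hα2]
    rw [hq, div_mul_eq_mul_div]
    apply div_le_div_of_nonneg_left (by positivity) (by positivity)
    nlinarith
  -- geometric bound
  have hbound : ∀ n : ℕ, |cSeq m α n - L| ≤ q ^ n * |1 - L| := by
    intro n
    induction n with
    | zero => simp [cSeq]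
    | succ n ih =>
        have hst := hstep (cSeq m α n) (cSeq_pos m α hm hα n)
        calc |cSeq m α (n + 1) - L| ≤ q * |cSeq m α n - L| := hst
          _ ≤ q * (q ^ n * |1 - L|) := mul_le_mul_of_nonneg_left ih hq0
          _ = q ^ (n + 1) * |1 - L| := by ring
  have htend0 : Filter.Tendsto (fun n => q ^ n * |1 - L|) Filter.atTop (nhds 0) := by
    simpa using (tendsto_pow_atTop_nhds_zero_of_lt_one hq0 hq1).mul_const |1 - L|
  have htendc : Filter.Tendsto (cSeq m α) Filter.atTop (nhds L) := by
    rw [tendsto_iff_dist_tendsto_zero]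
    apply squeeze_zero (fun n => dist_nonneg) _ htend0
    intro n
    rw [Real.dist_eq]
    exact hbound n
  exact htendc.congr (fun n => (aSeq_eq m α hm hα n).symm)
end

section
/- Let m > 0 and α ≥ 1. For each n ≥ 0 define a_n := 2·inf { Σ_{i=1}^n (m/2)·y_i² + Σ_{i=1}^{n+1} (1/2)·(y_i − α·y_{i−1})² : y_0, y_1, …, y_{n+1} ∈ ℝ, y_0 = 0, y_{n+1} = 1 }. Then a_0 = 1 and the sequence satisfies the recursion a_{n+1} = (a_n + m)/(a_n + m + α²) for all n ≥ 0. -/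


noncomputable def vSeq (m α : ℝ) : ℕ → ℝ
  | 0 => 1/2
  | n+1 => (2 * vSeq m α n + m) / (2 * (2 * vSeq m α n + m + α ^ 2))

lemma vSeq_nonneg (m α : ℝ) (hm : 0 < m) (hα : 1 ≤ α) : ∀ n, 0 ≤ vSeq m α n := by
  intro n
  induction n with
  | zero => norm_num [vSeq]
  | succ n ih =>
    have hα2 : (0:ℝ) < α ^ 2 := by positivity
    rw [vSeq]
    positivity

lemma key (m α : ℝ) (hm : 0 < m) (hα : 1 ≤ α) :
    ∀ n, IsLeast { r : ℝ | ∃ y : ℕ → ℝ, y 0 = 0 ∧ y (n + 1) = 1 ∧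
      r = ∑ i ∈ Finset.Icc 1 n, m / 2 * (y i) ^ 2
        + ∑ i ∈ Finset.Icc 1 (n + 1), 1 / 2 * (y i - α * y (i - 1)) ^ 2 }
      (vSeq m α n) := by
  intro n
  induction n with
  | zero =>
    constructor
    · exact ⟨fun i => if i = 0 then 0 else 1, by simp, by simp, by norm_num [vSeq]⟩
    · rintro r ⟨y, h0, h1, rfl⟩
      simp [h0, h1, vSeq]
  | succ n ih =>
    have hv : 0 ≤ vSeq m α n := vSeq_nonneg m α hm hα n
    set v := vSeq m α n with hvdef
    have hA : (0:ℝ) < 2 * v + m := by linarith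
    have hB : (0:ℝ) < 2 * v + m + α ^ 2 := by nlinarith
    have hBne : (2 * v + m + α ^ 2) ≠ 0 := ne_of_gt hB
    constructor
    · -- membership: optimal path
      obtain ⟨y, hy0, hy1, hyv⟩ := ih.1
      set t : ℝ := α / (2 * v + m + α ^ 2) with htdef
      refine ⟨fun i => if i = n + 2 then 1 else t * y i, by simp [hy0], by simp, ?_⟩
      have h1 : ∑ i ∈ Finset.Icc 1 (n+1),
            m / 2 * ((if i = n + 2 then 1 else t * y i) : ℝ) ^ 2
          = ∑ i ∈ Finset.Icc 1 n, t^2 * (m / 2 * (y i) ^ 2)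
            + m / 2 * t ^ 2 := by
        rw [Finset.sum_Icc_succ_top (by omega)]
        congr 1
        · refine Finset.sum_congr rfl fun i hi => ?_
          simp only [Finset.mem_Icc] at hi
          rw [if_neg (by omega)]; ring
        · rw [if_neg (by omega), hy1]; ring
      have h2 : ∑ i ∈ Finset.Icc 1 (n+2),
            (1:ℝ) / 2 * ((if i = n + 2 then 1 else t * y i)
              - α * (if i - 1 = n + 2 then 1 else t * y (i-1))) ^ 2
          = ∑ i ∈ Finset.Icc 1 (n+1), t^2 * (1 / 2 * (y i - α * y (i-1)) ^ 2)
            + 1 / 2 * (1 - α * t) ^ 2 := by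
        rw [Finset.sum_Icc_succ_top (by omega)]
        congr 1
        · refine Finset.sum_congr rfl fun i hi => ?_
          simp only [Finset.mem_Icc] at hi
          rw [if_neg (by omega), if_neg (by omega)]; ring
        · rw [if_pos rfl, if_neg (by omega)]
          simp only [Nat.add_sub_cancel, hy1]
          ring
      have e1 : ∑ i ∈ Finset.Icc 1 n, t ^ 2 * (m / 2 * (y i) ^ 2)
          = t ^ 2 * ∑ i ∈ Finset.Icc 1 n, m / 2 * (y i) ^ 2 :=
        (Finset.mul_sum _ _ _).symm
      have e2 : ∑ i ∈ Finset.Icc 1 (n+1), t ^ 2 * (1 / 2 * (y i - α * y (i-1)) ^ 2)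
          = t ^ 2 * ∑ i ∈ Finset.Icc 1 (n+1), 1 / 2 * (y i - α * y (i-1)) ^ 2 :=
        (Finset.mul_sum _ _ _).symm
      rw [h1, h2, e1, e2, vSeq, ← hvdef]
      have e3 : t ^ 2 * (∑ i ∈ Finset.Icc 1 n, m / 2 * (y i) ^ 2) + m / 2 * t ^ 2
          + (t ^ 2 * (∑ i ∈ Finset.Icc 1 (n+1), 1 / 2 * (y i - α * y (i-1)) ^ 2)
            + 1 / 2 * (1 - α * t) ^ 2)
          = t ^ 2 * v + m / 2 * t ^ 2 + 1 / 2 * (1 - α * t) ^ 2 := by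
        rw [hyv]; ring
      rw [e3, htdef]
      field_simp
      ring
    · -- lower bound
      rintro r ⟨y, hy0, hy1, rfl⟩
      set t : ℝ := y (n+1) with htdef
      rw [Finset.sum_Icc_succ_top (a := 1) (b := n) (by omega),
          Finset.sum_Icc_succ_top (a := 1) (b := n+1) (by omega)]
      set P := ∑ i ∈ Finset.Icc 1 n, m / 2 * (y i) ^ 2 with hP
      set Q := ∑ i ∈ Finset.Icc 1 (n+1), 1 / 2 * (y i - α * y (i-1)) ^ 2 with hQ
      have hPQ : v * t ^ 2 ≤ P + Q := by
        by_cases ht : t = 0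
        · have hPn : 0 ≤ P := Finset.sum_nonneg fun i _ => by positivity
          have hQn : 0 ≤ Q := Finset.sum_nonneg fun i _ => by positivity
          rw [ht]; nlinarith
        · have h1 : (P + Q) / t ^ 2
              = ∑ i ∈ Finset.Icc 1 n, m / 2 * (y i / t) ^ 2
                + ∑ i ∈ Finset.Icc 1 (n+1), 1 / 2 * (y i / t - α * (y (i-1) / t)) ^ 2 := by
            rw [hP, hQ, add_div, Finset.sum_div, Finset.sum_div]
            congr 1 <;> refine Finset.sum_congr rfl fun i hi => ?_ <;> field_simp
          have hmem : (P + Q) / t ^ 2 ∈ { r : ℝ | ∃ y : ℕ → ℝ, y 0 = 0 ∧ y (n + 1) = 1 ∧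
              r = ∑ i ∈ Finset.Icc 1 n, m / 2 * (y i) ^ 2
                + ∑ i ∈ Finset.Icc 1 (n + 1), 1 / 2 * (y i - α * y (i - 1)) ^ 2 } :=
            ⟨fun i => y i / t, by simp [hy0], by show y (n+1) / t = 1; rw [← htdef]; exact div_self ht, h1⟩
          have := ih.2 hmem
          have ht2 : (0:ℝ) < t ^ 2 := by positivity
          calc v * t ^ 2 ≤ ((P + Q) / t ^ 2) * t ^ 2 := by nlinarith
            _ = P + Q := by field_simp
      have hfinal : vSeq m α (n+1)
          ≤ v * t ^ 2 + m / 2 * t ^ 2 + 1 / 2 * (1 - α * t) ^ 2 := by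
        rw [vSeq, ← hvdef]
        have key2 : v * t ^ 2 + m / 2 * t ^ 2 + 1 / 2 * (1 - α * t) ^ 2
            - (2 * v + m) / (2 * (2 * v + m + α ^ 2))
            = ((2 * v + m + α ^ 2) * t - α) ^ 2 / (2 * (2 * v + m + α ^ 2)) := by
          field_simp
          ring
        nlinarith [sq_nonneg ((2 * v + m + α ^ 2) * t - α), div_nonneg (sq_nonneg ((2 * v + m + α ^ 2) * t - α)) (le_of_lt (by linarith : (0:ℝ) < 2 * (2 * v + m + α ^ 2)))]
      rw [hy1]
      calc vSeq m α (n+1) ≤ v * t ^ 2 + m / 2 * t ^ 2 + 1 / 2 * (1 - α * t) ^ 2 := hfinal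
        _ ≤ P + m / 2 * t ^ 2 + (Q + 1 / 2 * (1 - α * t) ^ 2) := by linarith

/-- `a_0 = 1` and the recursion `a_{n+1} = (a_n + m)/(a_n + m + α²)`. -/
theorem stmt11 (m α : ℝ) (hm : 0 < m) (hα : 1 ≤ α) :
    aSeq m α 0 = 1 ∧
      ∀ n : ℕ, aSeq m α (n + 1) = (aSeq m α n + m) / (aSeq m α n + m + α ^ 2) := by
  have h : ∀ n, aSeq m α n = 2 * vSeq m α n := fun n => by
    unfold aSeq
    rw [(key m α hm hα n).csInf_eq]
  constructor
  · rw [h]; norm_num [vSeq]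
  · intro n
    have hv : 0 ≤ vSeq m α n := vSeq_nonneg m α hm hα n
    have hB : (0:ℝ) < 2 * vSeq m α n + m + α ^ 2 := by nlinarith
    rw [h, h, vSeq]
    field_simp
end

section
/- For t = 1, …, T let h_t : ℝ^d → ℝ be nonnegative, m-strongly convex, l-strongly smooth, and minimized at 0; let Ω_t ⊆ ℝ^d be nonempty, closed, and convex; let v_t ∈ Ω_t; and set f_t(y) := h_t(y − v_t). Define the sequence (y_t) extending the fixed initial points by letting y_t be the metric projection of Σ_{i=1}^p C_i v_{t−i} onto Ω_t (where v_s equals the initial point for s ≤ 0). Then for every η > 0 and every comparator sequence (y*_t) extending the same initial points, Σ_{t=1}^T [ f_t(y_t) + (1/2)‖y_t − Σ_{i=1}^p C_i y_{t−i}‖² ] ≤ (1 + η)·(1 + (1 + α)²/m) · Σ_{t=1}^T [ f_t(y*_t) + (1/2)‖y*_t − Σ_{i=1}^p C_i y*_{t−i}‖² ] + ( l + (1 + 1/η)·α² − (1 + η) ) · Σ_{t=1}^T (1/2)‖y_t − v_t‖². -/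
open Finset

private lemma cs_sum {ι : Type*} (s : Finset ι) (c x : ι → ℝ) (hc : ∀ i ∈ s, 0 ≤ c i) :
    (∑ i ∈ s, c i * x i) ^ 2 ≤ (∑ i ∈ s, c i) * ∑ i ∈ s, c i * x i ^ 2 := by
  have h := Finset.sum_mul_sq_le_sq_mul_sq s (fun i => Real.sqrt (c i))
    (fun i => Real.sqrt (c i) * x i)
  have e1 : ∑ i ∈ s, Real.sqrt (c i) * (Real.sqrt (c i) * x i) = ∑ i ∈ s, c i * x i := by
    refine Finset.sum_congr rfl fun i hi => ?_
    rw [← mul_assoc, Real.mul_self_sqrt (hc i hi)]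
  have e2 : ∑ i ∈ s, Real.sqrt (c i) ^ 2 = ∑ i ∈ s, c i := by
    refine Finset.sum_congr rfl fun i hi => ?_
    rw [Real.sq_sqrt (hc i hi)]
  have e3 : ∑ i ∈ s, (Real.sqrt (c i) * x i) ^ 2 = ∑ i ∈ s, c i * x i ^ 2 := by
    refine Finset.sum_congr rfl fun i hi => ?_
    rw [mul_pow, Real.sq_sqrt (hc i hi)]
  rw [e1, e2, e3] at h
  exact h

private lemma split_sq (a b x z : ℝ) (ha : 0 < a) (hb : 0 < b) :
    (x + z) ^ 2 ≤ (1 + b / a) * x ^ 2 + (1 + a / b) * z ^ 2 := by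
  have hab : 0 < a * b := mul_pos ha hb
  have key : (x + z) ^ 2 * (a * b) ≤ (a * b + b * b) * x ^ 2 + (a * b + a * a) * z ^ 2 := by
    nlinarith [sq_nonneg (b * x - a * z)]
  have expand : (1 + b / a) * x ^ 2 + (1 + a / b) * z ^ 2
      = ((a * b + b * b) * x ^ 2 + (a * b + a * a) * z ^ 2) / (a * b) := by
    field_simp
  rw [expand, le_div_iff₀ hab]
  linarith

private lemma shift_sum_le (T : ℤ) (g : ℤ → ℝ) (hg : ∀ s, 0 ≤ g s) (h0 : ∀ s ≤ 0, g s = 0)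
    (c : ℤ) (hc : 0 ≤ c) :
    (∑ t ∈ Finset.Icc (1 : ℤ) T, g (t - 1 - c)) ≤ ∑ t ∈ Finset.Icc (1 : ℤ) T, g t := by
  classical
  have e1 : ∑ t ∈ (Finset.Icc (1 : ℤ) T).filter (fun t => 1 ≤ t - 1 - c), g (t - 1 - c)
      = ∑ t ∈ Finset.Icc (1 : ℤ) T, g (t - 1 - c) := by
    refine Finset.sum_filter_of_ne fun t ht hne => ?_
    by_contra hlt
    exact hne (h0 _ (by omega))
  rw [← e1]
  have e2 : ∑ t ∈ (Finset.Icc (1 : ℤ) T).filter (fun t => 1 ≤ t - 1 - c), g (t - 1 - c)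
      = ∑ s ∈ ((Finset.Icc (1 : ℤ) T).filter (fun t => 1 ≤ t - 1 - c)).image (fun t => t - 1 - c), g s := by
    rw [Finset.sum_image]
    intro a _ b _ hab; have hab' : a - 1 - c = b - 1 - c := hab; omega
  rw [e2]
  refine Finset.sum_le_sum_of_subset_of_nonneg ?_ fun s _ _ => hg s
  intro s hs
  simp only [Finset.mem_image, Finset.mem_filter, Finset.mem_Icc] at hs ⊢
  obtain ⟨t, ⟨⟨ht1, ht2⟩, ht3⟩, rfl⟩ := hs
  omega

private lemma shift_double (T : ℤ) {p : ℕ} (c : Fin p → ℝ) (hc : ∀ i, 0 ≤ c i)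
    (g : ℤ → ℝ) (hg : ∀ s, 0 ≤ g s) (h0 : ∀ s ≤ 0, g s = 0) :
    ∑ t ∈ Finset.Icc (1 : ℤ) T, ∑ i : Fin p, c i * g (t - 1 - ((i : ℕ) : ℤ))
      ≤ (∑ i : Fin p, c i) * ∑ t ∈ Finset.Icc (1 : ℤ) T, g t := by
  rw [Finset.sum_comm, Finset.sum_mul]
  refine Finset.sum_le_sum fun i _ => ?_
  rw [← Finset.mul_sum]
  exact mul_le_mul_of_nonneg_left
    (shift_sum_le T g hg h0 ((i : ℕ) : ℤ) (by positivity)) (hc i)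

private lemma sc_lb {F : Type*} [NormedAddCommGroup F] [NormedSpace ℝ F]
    (h : F → ℝ) (m : ℝ) (hm : 0 < m)
    (hc : ConvexOn ℝ Set.univ (fun x => h x - m / 2 * ‖x‖ ^ 2))
    (hmin : ∀ z, h 0 ≤ h z) (z : F) :
    h 0 + m / 2 * ‖z‖ ^ 2 ≤ h z := by
  refine le_of_forall_pos_le_add fun ε hε => ?_
  set R : ℝ := ‖z‖ ^ 2 with hR
  have hR0 : 0 ≤ R := by positivity
  have hden : 0 < m / 2 * R + 1 := by positivity
  set t : ℝ := min 1 (ε / (m / 2 * R + 1)) with htdef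
  have ht0 : 0 < t := lt_min one_pos (div_pos hε hden)
  have ht1 : t ≤ 1 := min_le_left _ _
  have hconv := hc.2 (Set.mem_univ z) (Set.mem_univ (0 : F)) (le_of_lt ht0)
    (by linarith : (0:ℝ) ≤ 1 - t) (by ring)
  simp only [smul_zero, add_zero, smul_eq_mul] at hconv
  have hn : ‖t • z‖ ^ 2 = t ^ 2 * R := by
    rw [norm_smul, Real.norm_eq_abs, abs_of_pos ht0, mul_pow, hR]
  rw [hn, norm_zero, ← hR] at hconv
  have hmin' := hmin (t • z)
  -- hconv : h (t • z) - m/2 * (t^2 * R) ≤ t * (h z - m/2 * R) + (1 - t) * (h 0 - m/2 * 0 ^ 2)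
  have hdiv : t * (h 0 + m / 2 * (1 - t) * R) ≤ t * h z := by nlinarith
  have hdiv2 : h 0 + m / 2 * (1 - t) * R ≤ h z := le_of_mul_le_mul_left hdiv ht0
  have htb : t * (m / 2 * R + 1) ≤ ε := by
    have := min_le_right (1:ℝ) (ε / (m / 2 * R + 1))
    calc t * (m / 2 * R + 1) ≤ ε / (m / 2 * R + 1) * (m / 2 * R + 1) := by
          exact mul_le_mul_of_nonneg_right (htdef ▸ this) (le_of_lt hden)
      _ = ε := div_mul_cancel₀ _ (ne_of_gt hden)
  nlinarith

private lemma proj_ineq {F : Type*} [NormedAddCommGroup F] [InnerProductSpace ℝ F]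
    {K : Set F} (hK : Convex ℝ K) {y s v : F} (hy : y ∈ K) (hv : v ∈ K)
    (hmin : ∀ z ∈ K, ‖y - s‖ ≤ ‖z - s‖) :
    ‖y - s‖ ^ 2 + ‖y - v‖ ^ 2 ≤ ‖v - s‖ ^ 2 := by
  have hinf : ‖s - y‖ = ⨅ w : K, ‖s - (w : F)‖ := by
    have : Nonempty K := ⟨⟨y, hy⟩⟩
    refine le_antisymm (le_ciInf fun w => ?_) (ciInf_le ⟨0, ?_⟩ (⟨y, hy⟩ : K))
    · rw [norm_sub_rev s y, norm_sub_rev s (w : F)]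
      exact hmin w w.2
    · rintro r ⟨w, rfl⟩; exact norm_nonneg _
  have hchar := (norm_eq_iInf_iff_real_inner_le_zero hK hy).mp hinf
  have h1 : inner ℝ (s - y) (v - y) ≤ 0 := hchar v hv
  have h1' : inner ℝ (v - y) (s - y) ≤ 0 := by rw [real_inner_comm]; exact h1
  have expand : ‖v - s‖ ^ 2
      = ‖v - y‖ ^ 2 - 2 * inner ℝ (v - y) (s - y) + ‖s - y‖ ^ 2 := by
    have e : v - s = (v - y) - (s - y) := by abel
    rw [e, norm_sub_sq_real]
  rw [norm_sub_rev y s, norm_sub_rev y v, expand]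
  linarith

private lemma final_combine (η α m l Sfy Ha2 Hh0 HD HE HQ HW HF : ℝ)
    (hη : 0 < η) (hm : 0 < m) (hα : 0 ≤ α) (hh0 : 0 ≤ Hh0)
    (H1 : Sfy ≤ Hh0 + l / 2 * HD)
    (H2 : Ha2 ≤ (1 + η) * (HQ - HD) + (1 + 1 / η) * α * (α * HD))
    (H3 : HQ ≤ (1 + (1 + α) ^ 2 / m) * HW + ((1 + α) ^ 2 + m) * HE)
    (H4 : HE ≤ 2 / m * (HF - Hh0)) :
    Sfy + 1 / 2 * Ha2
      ≤ (1 + η) * (1 + (1 + α) ^ 2 / m) * (HF + 1 / 2 * HW)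
        + (l + (1 + 1 / η) * α ^ 2 - (1 + η)) * (1 / 2 * HD) := by
  have hc2 : (0:ℝ) ≤ (1 + η) / 2 := by linarith
  have G1 : (1 + η) / 2 * HQ
      ≤ (1 + η) / 2 * ((1 + (1 + α) ^ 2 / m) * HW + ((1 + α) ^ 2 + m) * HE) :=
    mul_le_mul_of_nonneg_left H3 hc2
  have hX : (0:ℝ) ≤ (1 + η) / 2 * ((1 + α) ^ 2 + m) := by positivity
  have G2 : (1 + η) / 2 * ((1 + α) ^ 2 + m) * HE
      ≤ (1 + η) / 2 * ((1 + α) ^ 2 + m) * (2 / m * (HF - Hh0)) :=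
    mul_le_mul_of_nonneg_left H4 hX
  have Gid : (1 + η) / 2 * ((1 + α) ^ 2 + m) * (2 / m * (HF - Hh0))
      = (1 + η) * (1 + (1 + α) ^ 2 / m) * (HF - Hh0) := by
    field_simp; ring
  rw [Gid] at G2
  have hK1 : (1:ℝ) ≤ (1 + η) * (1 + (1 + α) ^ 2 / m) := by
    have : (0:ℝ) ≤ (1 + α) ^ 2 / m := by positivity
    nlinarith
  have Hsign : Hh0 ≤ (1 + η) * (1 + (1 + α) ^ 2 / m) * Hh0 :=
    le_mul_of_one_le_left hh0 hK1
  nlinarith [G1, G2, Hsign, H1, H2]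

set_option maxHeartbeats 1000000 in
/-- cost bound for Optimistic ROBD with `λ = 0`, i.e. the algorithm that
plays the metric projection of `∑ C_i v_{t-i}` onto the estimation set `Ω_t`. -/
theorem stmt13
    (d p T : ℕ) (hd : 1 ≤ d) (hp : 1 ≤ p) (hT : 1 ≤ T)
    (C : Fin p → (EuclideanSpace ℝ (Fin d) →L[ℝ] EuclideanSpace ℝ (Fin d)))
    (α : ℝ) (hα : α = ∑ i : Fin p, ‖C i‖)
    (m l : ℝ) (hm : 0 < m) (hl : 0 < l)
    (h : ℤ → EuclideanSpace ℝ (Fin d) → ℝ)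
    (Ω : ℤ → Set (EuclideanSpace ℝ (Fin d)))
    (v : ℤ → EuclideanSpace ℝ (Fin d))
    -- each `h t` is nonnegative, `m`-strongly convex, `l`-strongly smooth, minimized at `0`
    (hnonneg : ∀ t ∈ Finset.Icc (1 : ℤ) (T : ℤ), ∀ z, 0 ≤ h t z)
    (hconv : ∀ t ∈ Finset.Icc (1 : ℤ) (T : ℤ),
      ConvexOn ℝ Set.univ (fun x => h t x - m / 2 * ‖x‖ ^ 2))
    (hdiff : ∀ t ∈ Finset.Icc (1 : ℤ) (T : ℤ), Differentiable ℝ (h t))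
    (hsmooth : ∀ t ∈ Finset.Icc (1 : ℤ) (T : ℤ), ∀ x z,
      h t z ≤ h t x + fderiv ℝ (h t) x (z - x) + l / 2 * ‖z - x‖ ^ 2)
    (hmin0 : ∀ t ∈ Finset.Icc (1 : ℤ) (T : ℤ), ∀ z, h t 0 ≤ h t z)
    -- each `Ω t` is nonempty, closed and convex, and contains `v t`
    (hΩ : ∀ t ∈ Finset.Icc (1 : ℤ) (T : ℤ),
      (Ω t).Nonempty ∧ IsClosed (Ω t) ∧ Convex ℝ (Ω t))
    (hvΩ : ∀ t ∈ Finset.Icc (1 : ℤ) (T : ℤ), v t ∈ Ω t)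
    -- the hitting cost `f t y = h t (y − v t)`
    (f : ℤ → EuclideanSpace ℝ (Fin d) → ℝ)
    (hf : ∀ t, ∀ z, f t z = h t (z - v t))
    (y₀ y ystar : ℤ → EuclideanSpace ℝ (Fin d))
    -- `v`, `y` and the comparator extend the fixed initial points
    (hvinit : ∀ s : ℤ, s ≤ 0 → v s = y₀ s)
    (hyinit : ∀ s : ℤ, s ≤ 0 → y s = y₀ s)
    (hystarinit : ∀ s : ℤ, s ≤ 0 → ystar s = y₀ s)
    -- `y t` is the metric projection of `∑ C_i v_{t-i}` onto `Ω t`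
    (hproj : ∀ t ∈ Finset.Icc (1 : ℤ) (T : ℤ),
      y t ∈ Ω t ∧ ∀ z ∈ Ω t,
        ‖y t - ∑ i : Fin p, C i (v (t - 1 - ((i : ℕ) : ℤ)))‖
          ≤ ‖z - ∑ i : Fin p, C i (v (t - 1 - ((i : ℕ) : ℤ)))‖)
    (η : ℝ) (hη : 0 < η) :
    ∑ t ∈ Finset.Icc (1 : ℤ) (T : ℤ),
        (f t (y t) + 1 / 2 * ‖y t - ∑ i : Fin p, C i (y (t - 1 - ((i : ℕ) : ℤ)))‖ ^ 2)
      ≤ (1 + η) * (1 + (1 + α) ^ 2 / m)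
          * ∑ t ∈ Finset.Icc (1 : ℤ) (T : ℤ),
              (f t (ystar t)
                + 1 / 2 * ‖ystar t - ∑ i : Fin p, C i (ystar (t - 1 - ((i : ℕ) : ℤ)))‖ ^ 2)
        + (l + (1 + 1 / η) * α ^ 2 - (1 + η))
          * ∑ t ∈ Finset.Icc (1 : ℤ) (T : ℤ), (1 / 2 * ‖y t - v t‖ ^ 2) := by
  classical
  have hα0 : 0 ≤ α := by
    rw [hα]; exact Finset.sum_nonneg fun i _ => norm_nonneg _
  have hν : (0:ℝ) < 1 + α := by linarith
  set I := Finset.Icc (1 : ℤ) (T : ℤ) with hIdef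
  -- per-step smoothness bound
  have key1 : ∀ t ∈ I, f t (y t) ≤ h t 0 + l / 2 * ‖y t - v t‖ ^ 2 := by
    intro t ht
    have hloc : IsLocalMin (h t) 0 := Filter.Eventually.of_forall fun z => hmin0 t ht z
    have hf0 : fderiv ℝ (h t) 0 = 0 := hloc.fderiv_eq_zero
    have hs := hsmooth t ht 0 (y t - v t)
    rw [hf0] at hs
    simp only [ContinuousLinearMap.zero_apply, sub_zero, add_zero] at hs
    rw [hf t (y t)]
    linarith
  -- per-step strong convexity bound
  have keyE : ∀ t ∈ I, ‖ystar t - v t‖ ^ 2 ≤ 2 / m * (f t (ystar t) - h t 0) := by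
    intro t ht
    have hsc := sc_lb (h t) m hm (hconv t ht) (hmin0 t ht) (ystar t - v t)
    rw [hf t (ystar t), div_mul_eq_mul_div, le_div_iff₀ hm]
    linarith
  have hD0 : ∀ s : ℤ, s ≤ 0 → ‖y s - v s‖ ^ 2 = 0 := by
    intro s hs; rw [hyinit s hs, hvinit s hs, sub_self, norm_zero]; norm_num
  have hE0 : ∀ s : ℤ, s ≤ 0 → ‖ystar s - v s‖ ^ 2 = 0 := by
    intro s hs; rw [hystarinit s hs, hvinit s hs, sub_self, norm_zero]; norm_num
  -- triangle inequality for the algorithm's movement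
  have htriA : ∀ t : ℤ, ‖y t - ∑ i : Fin p, C i (y (t - 1 - ((i : ℕ) : ℤ)))‖
      ≤ ‖y t - ∑ i : Fin p, C i (v (t - 1 - ((i : ℕ) : ℤ)))‖
        + ∑ i : Fin p, ‖C i‖ * ‖y (t - 1 - ((i : ℕ) : ℤ)) - v (t - 1 - ((i : ℕ) : ℤ))‖ := by
    intro t
    have e : y t - ∑ i : Fin p, C i (y (t - 1 - ((i : ℕ) : ℤ)))
        = (y t - ∑ i : Fin p, C i (v (t - 1 - ((i : ℕ) : ℤ))))
          + ∑ i : Fin p, (C i (v (t - 1 - ((i : ℕ) : ℤ))) - C i (y (t - 1 - ((i : ℕ) : ℤ)))) := by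
      rw [Finset.sum_sub_distrib]; abel
    rw [e]
    refine (norm_add_le _ _).trans (add_le_add (le_refl _) ?_)
    refine (norm_sum_le _ _).trans (Finset.sum_le_sum fun i _ => ?_)
    rw [← map_sub]
    calc ‖C i (v (t - 1 - ((i : ℕ) : ℤ)) - y (t - 1 - ((i : ℕ) : ℤ)))‖
        ≤ ‖C i‖ * ‖v (t - 1 - ((i : ℕ) : ℤ)) - y (t - 1 - ((i : ℕ) : ℤ))‖ := (C i).le_opNorm _
      _ = ‖C i‖ * ‖y (t - 1 - ((i : ℕ) : ℤ)) - v (t - 1 - ((i : ℕ) : ℤ))‖ := by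
          rw [norm_sub_rev]
  -- triangle inequality relating v to the comparator
  have htriB : ∀ t : ℤ, ‖v t - ∑ i : Fin p, C i (v (t - 1 - ((i : ℕ) : ℤ)))‖
      ≤ ‖ystar t - ∑ i : Fin p, C i (ystar (t - 1 - ((i : ℕ) : ℤ)))‖
        + (‖ystar t - v t‖
          + ∑ i : Fin p, ‖C i‖ * ‖ystar (t - 1 - ((i : ℕ) : ℤ)) - v (t - 1 - ((i : ℕ) : ℤ))‖) := by
    intro t
    have e : v t - ∑ i : Fin p, C i (v (t - 1 - ((i : ℕ) : ℤ)))
        = (ystar t - ∑ i : Fin p, C i (ystar (t - 1 - ((i : ℕ) : ℤ))))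
          + ((v t - ystar t)
            + ∑ i : Fin p, (C i (ystar (t - 1 - ((i : ℕ) : ℤ))) - C i (v (t - 1 - ((i : ℕ) : ℤ))))) := by
      rw [Finset.sum_sub_distrib]; abel
    rw [e]
    refine (norm_add_le _ _).trans (add_le_add (le_refl _) ?_)
    refine (norm_add_le _ _).trans (add_le_add ?_ ?_)
    · rw [norm_sub_rev]
    refine (norm_sum_le _ _).trans (Finset.sum_le_sum fun i _ => ?_)
    rw [← map_sub]
    exact (C i).le_opNorm _
  -- Cauchy–Schwarz facts
  have hcsD : ∀ t : ℤ,
      (∑ i : Fin p, ‖C i‖ * ‖y (t - 1 - ((i : ℕ) : ℤ)) - v (t - 1 - ((i : ℕ) : ℤ))‖) ^ 2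
        ≤ α * ∑ i : Fin p, ‖C i‖ * ‖y (t - 1 - ((i : ℕ) : ℤ)) - v (t - 1 - ((i : ℕ) : ℤ))‖ ^ 2 := by
    intro t
    rw [hα]
    exact cs_sum Finset.univ _ _ fun i _ => norm_nonneg _
  have hcsE : ∀ t : ℤ,
      (‖ystar t - v t‖
        + ∑ i : Fin p, ‖C i‖ * ‖ystar (t - 1 - ((i : ℕ) : ℤ)) - v (t - 1 - ((i : ℕ) : ℤ))‖) ^ 2
      ≤ (1 + α) * (‖ystar t - v t‖ ^ 2
        + ∑ i : Fin p, ‖C i‖ * ‖ystar (t - 1 - ((i : ℕ) : ℤ)) - v (t - 1 - ((i : ℕ) : ℤ))‖ ^ 2) := by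
    intro t
    have hc : ∀ j ∈ (Finset.univ : Finset (Fin (p + 1))),
        0 ≤ (Fin.cons 1 (fun i : Fin p => ‖C i‖) : Fin (p + 1) → ℝ) j := by
      intro j _
      refine Fin.cases ?_ ?_ j
      · simp only [Fin.cons_zero]; exact zero_le_one
      · intro i; simp only [Fin.cons_succ]; exact norm_nonneg _
    have hcs := cs_sum Finset.univ (Fin.cons 1 (fun i : Fin p => ‖C i‖))
      (Fin.cons (‖ystar t - v t‖)
        (fun i : Fin p => ‖ystar (t - 1 - ((i : ℕ) : ℤ)) - v (t - 1 - ((i : ℕ) : ℤ))‖)) hc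
    simp only [Fin.sum_univ_succ, Fin.cons_zero, Fin.cons_succ, one_mul, one_pow] at hcs
    rw [hα]
    exact hcs
  -- per-step bound for the algorithm's cost terms
  have stepAlg : ∀ t ∈ I,
      ‖y t - ∑ i : Fin p, C i (y (t - 1 - ((i : ℕ) : ℤ)))‖ ^ 2
        ≤ (1 + η) * (‖v t - ∑ i : Fin p, C i (v (t - 1 - ((i : ℕ) : ℤ)))‖ ^ 2
              - ‖y t - v t‖ ^ 2)
          + ((1 + 1 / η) * α)
            * ∑ i : Fin p, ‖C i‖ * ‖y (t - 1 - ((i : ℕ) : ℤ)) - v (t - 1 - ((i : ℕ) : ℤ))‖ ^ 2 := by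
    intro t ht
    obtain ⟨hyΩ, hminp⟩ := hproj t ht
    have hPQ := proj_ineq (hΩ t ht).2.2 hyΩ (hvΩ t ht) hminp
    have t1 := htriA t
    have t2 : ‖y t - ∑ i : Fin p, C i (y (t - 1 - ((i : ℕ) : ℤ)))‖ ^ 2
        ≤ (‖y t - ∑ i : Fin p, C i (v (t - 1 - ((i : ℕ) : ℤ)))‖
            + ∑ i : Fin p, ‖C i‖ * ‖y (t - 1 - ((i : ℕ) : ℤ)) - v (t - 1 - ((i : ℕ) : ℤ))‖) ^ 2 :=
      pow_le_pow_left₀ (norm_nonneg _) t1 2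
    have t3 := split_sq 1 η
      (‖y t - ∑ i : Fin p, C i (v (t - 1 - ((i : ℕ) : ℤ)))‖)
      (∑ i : Fin p, ‖C i‖ * ‖y (t - 1 - ((i : ℕ) : ℤ)) - v (t - 1 - ((i : ℕ) : ℤ))‖)
      one_pos hη
    rw [div_one] at t3
    have t4 := hcsD t
    have hco : (0:ℝ) ≤ 1 + 1 / η := by positivity
    have h5 : (1 + η) * ‖y t - ∑ i : Fin p, C i (v (t - 1 - ((i : ℕ) : ℤ)))‖ ^ 2
        ≤ (1 + η) * (‖v t - ∑ i : Fin p, C i (v (t - 1 - ((i : ℕ) : ℤ)))‖ ^ 2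
            - ‖y t - v t‖ ^ 2) :=
      mul_le_mul_of_nonneg_left (by linarith) (by linarith)
    have h6 := mul_le_mul_of_nonneg_left t4 hco
    linarith [t2, t3, h5, h6]
  -- per-step bound for `‖v t - s t‖²`
  have stepQ : ∀ t ∈ I,
      ‖v t - ∑ i : Fin p, C i (v (t - 1 - ((i : ℕ) : ℤ)))‖ ^ 2
        ≤ (1 + (1 + α) ^ 2 / m)
            * ‖ystar t - ∑ i : Fin p, C i (ystar (t - 1 - ((i : ℕ) : ℤ)))‖ ^ 2
          + ((1 + m / (1 + α) ^ 2) * (1 + α))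
            * (‖ystar t - v t‖ ^ 2
              + ∑ i : Fin p, ‖C i‖ * ‖ystar (t - 1 - ((i : ℕ) : ℤ)) - v (t - 1 - ((i : ℕ) : ℤ))‖ ^ 2) := by
    intro t ht
    have t1 := htriB t
    have t2 : ‖v t - ∑ i : Fin p, C i (v (t - 1 - ((i : ℕ) : ℤ)))‖ ^ 2
        ≤ (‖ystar t - ∑ i : Fin p, C i (ystar (t - 1 - ((i : ℕ) : ℤ)))‖
            + (‖ystar t - v t‖
              + ∑ i : Fin p, ‖C i‖ * ‖ystar (t - 1 - ((i : ℕ) : ℤ)) - v (t - 1 - ((i : ℕ) : ℤ))‖)) ^ 2 :=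
      pow_le_pow_left₀ (norm_nonneg _) t1 2
    have t3 := split_sq m ((1 + α) ^ 2)
      (‖ystar t - ∑ i : Fin p, C i (ystar (t - 1 - ((i : ℕ) : ℤ)))‖)
      (‖ystar t - v t‖
        + ∑ i : Fin p, ‖C i‖ * ‖ystar (t - 1 - ((i : ℕ) : ℤ)) - v (t - 1 - ((i : ℕ) : ℤ))‖)
      hm (by positivity)
    have t4 := hcsE t
    have hco : (0:ℝ) ≤ 1 + m / (1 + α) ^ 2 := by positivity
    have h6 := mul_le_mul_of_nonneg_left t4 hco
    linarith [t2, t3, h6]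
  -- sum-level facts
  have Hh0nn : 0 ≤ ∑ t ∈ I, h t 0 := Finset.sum_nonneg fun t ht => hnonneg t ht 0
  have H1 : ∑ t ∈ I, f t (y t)
      ≤ (∑ t ∈ I, h t 0) + l / 2 * ∑ t ∈ I, ‖y t - v t‖ ^ 2 := by
    calc ∑ t ∈ I, f t (y t) ≤ ∑ t ∈ I, (h t 0 + l / 2 * ‖y t - v t‖ ^ 2) :=
          Finset.sum_le_sum key1
      _ = _ := by rw [Finset.sum_add_distrib, ← Finset.mul_sum]
  have H4 : ∑ t ∈ I, ‖ystar t - v t‖ ^ 2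
      ≤ 2 / m * ((∑ t ∈ I, f t (ystar t)) - ∑ t ∈ I, h t 0) := by
    calc ∑ t ∈ I, ‖ystar t - v t‖ ^ 2
        ≤ ∑ t ∈ I, (2 / m * (f t (ystar t) - h t 0)) := Finset.sum_le_sum keyE
      _ = _ := by rw [← Finset.mul_sum, Finset.sum_sub_distrib]
  have shiftD : ∑ t ∈ I, ∑ i : Fin p,
      ‖C i‖ * ‖y (t - 1 - ((i : ℕ) : ℤ)) - v (t - 1 - ((i : ℕ) : ℤ))‖ ^ 2
      ≤ α * ∑ t ∈ I, ‖y t - v t‖ ^ 2 := by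
    rw [hα]
    exact shift_double (T : ℤ) (fun i => ‖C i‖) (fun i => norm_nonneg _)
      (fun s => ‖y s - v s‖ ^ 2) (fun s => by positivity) hD0
  have shiftE : ∑ t ∈ I, ∑ i : Fin p,
      ‖C i‖ * ‖ystar (t - 1 - ((i : ℕ) : ℤ)) - v (t - 1 - ((i : ℕ) : ℤ))‖ ^ 2
      ≤ α * ∑ t ∈ I, ‖ystar t - v t‖ ^ 2 := by
    rw [hα]
    exact shift_double (T : ℤ) (fun i => ‖C i‖) (fun i => norm_nonneg _)
      (fun s => ‖ystar s - v s‖ ^ 2) (fun s => by positivity) hE0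
  have H2 : ∑ t ∈ I, ‖y t - ∑ i : Fin p, C i (y (t - 1 - ((i : ℕ) : ℤ)))‖ ^ 2
      ≤ (1 + η) * ((∑ t ∈ I, ‖v t - ∑ i : Fin p, C i (v (t - 1 - ((i : ℕ) : ℤ)))‖ ^ 2)
            - ∑ t ∈ I, ‖y t - v t‖ ^ 2)
        + (1 + 1 / η) * α * (α * ∑ t ∈ I, ‖y t - v t‖ ^ 2) := by
    have s1 := Finset.sum_le_sum stepAlg
    have s2 : ∑ t ∈ I, ((1 + η) * (‖v t - ∑ i : Fin p, C i (v (t - 1 - ((i : ℕ) : ℤ)))‖ ^ 2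
              - ‖y t - v t‖ ^ 2)
          + ((1 + 1 / η) * α)
            * ∑ i : Fin p, ‖C i‖ * ‖y (t - 1 - ((i : ℕ) : ℤ)) - v (t - 1 - ((i : ℕ) : ℤ))‖ ^ 2)
        = (1 + η) * ((∑ t ∈ I, ‖v t - ∑ i : Fin p, C i (v (t - 1 - ((i : ℕ) : ℤ)))‖ ^ 2)
              - ∑ t ∈ I, ‖y t - v t‖ ^ 2)
          + ((1 + 1 / η) * α) * ∑ t ∈ I, ∑ i : Fin p,
              ‖C i‖ * ‖y (t - 1 - ((i : ℕ) : ℤ)) - v (t - 1 - ((i : ℕ) : ℤ))‖ ^ 2 := by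
      rw [Finset.sum_add_distrib, ← Finset.mul_sum, ← Finset.mul_sum, Finset.sum_sub_distrib]
    rw [s2] at s1
    have s4 := mul_le_mul_of_nonneg_left shiftD
      (show (0:ℝ) ≤ (1 + 1 / η) * α by positivity)
    linarith
  have H3 : ∑ t ∈ I, ‖v t - ∑ i : Fin p, C i (v (t - 1 - ((i : ℕ) : ℤ)))‖ ^ 2
      ≤ (1 + (1 + α) ^ 2 / m)
          * ∑ t ∈ I, ‖ystar t - ∑ i : Fin p, C i (ystar (t - 1 - ((i : ℕ) : ℤ)))‖ ^ 2
        + ((1 + α) ^ 2 + m) * ∑ t ∈ I, ‖ystar t - v t‖ ^ 2 := by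
    have s1 := Finset.sum_le_sum stepQ
    have s2 : ∑ t ∈ I, ((1 + (1 + α) ^ 2 / m)
            * ‖ystar t - ∑ i : Fin p, C i (ystar (t - 1 - ((i : ℕ) : ℤ)))‖ ^ 2
          + ((1 + m / (1 + α) ^ 2) * (1 + α))
            * (‖ystar t - v t‖ ^ 2
              + ∑ i : Fin p, ‖C i‖ * ‖ystar (t - 1 - ((i : ℕ) : ℤ)) - v (t - 1 - ((i : ℕ) : ℤ))‖ ^ 2))
        = (1 + (1 + α) ^ 2 / m)
            * ∑ t ∈ I, ‖ystar t - ∑ i : Fin p, C i (ystar (t - 1 - ((i : ℕ) : ℤ)))‖ ^ 2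
          + ((1 + m / (1 + α) ^ 2) * (1 + α))
            * ((∑ t ∈ I, ‖ystar t - v t‖ ^ 2)
              + ∑ t ∈ I, ∑ i : Fin p,
                ‖C i‖ * ‖ystar (t - 1 - ((i : ℕ) : ℤ)) - v (t - 1 - ((i : ℕ) : ℤ))‖ ^ 2) := by
      rw [Finset.sum_add_distrib, ← Finset.mul_sum, ← Finset.mul_sum, Finset.sum_add_distrib]
    rw [s2] at s1
    have hco : (0:ℝ) ≤ (1 + m / (1 + α) ^ 2) * (1 + α) := by positivity
    have s4 : ((1 + m / (1 + α) ^ 2) * (1 + α))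
          * ((∑ t ∈ I, ‖ystar t - v t‖ ^ 2)
            + ∑ t ∈ I, ∑ i : Fin p,
              ‖C i‖ * ‖ystar (t - 1 - ((i : ℕ) : ℤ)) - v (t - 1 - ((i : ℕ) : ℤ))‖ ^ 2)
        ≤ ((1 + m / (1 + α) ^ 2) * (1 + α))
          * ((∑ t ∈ I, ‖ystar t - v t‖ ^ 2) + α * ∑ t ∈ I, ‖ystar t - v t‖ ^ 2) :=
      mul_le_mul_of_nonneg_left (by linarith) hco
    have s5 : ((1 + m / (1 + α) ^ 2) * (1 + α))
          * ((∑ t ∈ I, ‖ystar t - v t‖ ^ 2) + α * ∑ t ∈ I, ‖ystar t - v t‖ ^ 2)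
        = ((1 + α) ^ 2 + m) * ∑ t ∈ I, ‖ystar t - v t‖ ^ 2 := by
      have h1α : (1 + α) ≠ 0 := ne_of_gt hν
      field_simp
    linarith
  simp only [Finset.sum_add_distrib, ← Finset.mul_sum]
  exact final_combine η α m l _ _ _ _ _ _ _ _ hη hm hα0 Hh0nn H1 H2 H3 H4
end

section
/- Let a > 1, q > 0, and let k ∈ ℝ satisfy |a − k| < 1 (a stabilizing linear feedback gain). Let w : ℕ → ℝ be any disturbance sequence and define the closed-loop state sequence by x_0 = 0 and x_{t+1} = (a − k)·x_t + w_t for t ≥ 0. Then for every T ≥ 1, the cost of the linear controller u_t = −k·x_t satisfies Σ_{t=0}^T (q + k²)·x_t² ≥ ((q + (a − 1)²)/4) · Σ_{t=0}^{T−1} w_t². -/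
/-- lower bound on the cost of any stabilizing linear controller
`u_t = −k·x_t` in the scalar system `x_{t+1} = a·x_t + u_t + w_t`. -/
theorem stmt16 (a q k : ℝ) (ha : 1 < a) (hq : 0 < q) (hk : |a - k| < 1)
    (w : ℕ → ℝ) (x : ℕ → ℝ)
    (hx0 : x 0 = 0) (hxrec : ∀ t : ℕ, x (t + 1) = (a - k) * x t + w t)
    (T : ℕ) (hT : 1 ≤ T) :
    ∑ t ∈ Finset.range (T + 1), (q + k ^ 2) * x t ^ 2
      ≥ (q + (a - 1) ^ 2) / 4 * ∑ t ∈ Finset.range T, w t ^ 2 := by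
  obtain ⟨hlo, hhi⟩ := abs_lt.mp hk
  have hρ1 : (a - k) ^ 2 ≤ 1 := by nlinarith
  have hk2 : (a - 1) ^ 2 ≤ k ^ 2 := by nlinarith
  set S := ∑ t ∈ Finset.range (T + 1), x t ^ 2 with hS
  have hSnn : 0 ≤ S := Finset.sum_nonneg fun i _ => sq_nonneg _
  have hw : ∑ t ∈ Finset.range T, w t ^ 2 ≤ 4 * S := by
    have h1 : ∀ t, w t ^ 2 ≤ 2 * x (t + 1) ^ 2 + 2 * x t ^ 2 := by
      intro t
      have hwt : w t = x (t + 1) - (a - k) * x t := by linarith [hxrec t]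
      rw [hwt]
      nlinarith [sq_nonneg (x (t + 1) + (a - k) * x t), sq_nonneg (x t)]
    have h2 : ∑ t ∈ Finset.range T, x (t + 1) ^ 2 ≤ S := by
      have := Finset.sum_range_succ' (fun t => x t ^ 2) T
      rw [hS, this, hx0]
      simp
    have h3 : ∑ t ∈ Finset.range T, x t ^ 2 ≤ S := by
      apply Finset.sum_le_sum_of_subset_of_nonneg
      · exact Finset.range_subset_range.mpr (by omega)
      · exact fun i _ _ => sq_nonneg _
    calc ∑ t ∈ Finset.range T, w t ^ 2
        ≤ ∑ t ∈ Finset.range T, (2 * x (t + 1) ^ 2 + 2 * x t ^ 2) :=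
          Finset.sum_le_sum fun i _ => h1 i
      _ = 2 * ∑ t ∈ Finset.range T, x (t + 1) ^ 2
          + 2 * ∑ t ∈ Finset.range T, x t ^ 2 := by
          rw [Finset.sum_add_distrib, Finset.mul_sum, Finset.mul_sum]
      _ ≤ 4 * S := by linarith
  have hL : ∑ t ∈ Finset.range (T + 1), (q + k ^ 2) * x t ^ 2 = (q + k ^ 2) * S := by
    rw [hS, Finset.mul_sum]
  rw [hL]
  nlinarith [Finset.sum_nonneg (fun i (_ : i ∈ Finset.range T) => sq_nonneg (w i))]
end

section
/- Let a > 1, q > 0, w ∈ ℝ, T ≥ 1, and consider the constant disturbance sequence w_t = w for all t. Set u* := −q·w/(q + (a − 1)²) and c₁ := ((u* + w)/(1 − a) − w)². Then there exists a control sequence u_0, …, u_T such that the states defined by x_0 = 0 and x_{t+1} = a·x_t + u_t + w satisfy Σ_{t=0}^T (q·x_t² + u_t²) ≤ (q/(q + (a − 1)²))·T·w² + c₁. (Namely, u_0 = (u* + w)/(1 − a) − w and u_t = u* for t ≥ 1, which keeps x_t = (u* + w)/(1 − a) for all t ≥ 1.) -/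
/-- upper bound on the offline optimal cost for a constant disturbance
`w_t = w`, via the stationary controller `u_t = u*` for `t ≥ 1`. -/
theorem stmt18 (a q w : ℝ) (ha : 1 < a) (hq : 0 < q) (T : ℕ) (hT : 1 ≤ T)
    (ustar c1 : ℝ)
    (hustar : ustar = -(q * w) / (q + (a - 1) ^ 2))
    (hc1 : c1 = ((ustar + w) / (1 - a) - w) ^ 2) :
    ∃ u x : ℕ → ℝ, x 0 = 0 ∧ (∀ t : ℕ, x (t + 1) = a * x t + u t + w) ∧
      ∑ t ∈ Finset.range (T + 1), (q * x t ^ 2 + u t ^ 2)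
        ≤ q / (q + (a - 1) ^ 2) * T * w ^ 2 + c1 := by
  set D := q + (a - 1) ^ 2 with hD
  have hDpos : 0 < D := by positivity
  set xb : ℝ := (ustar + w) / (1 - a) with hxb
  have h1a : (1 : ℝ) - a ≠ 0 := by nlinarith
  have hrec : ustar + w = (1 - a) * xb := by
    rw [hxb]
    field_simp
  refine ⟨fun t => if t = 0 then xb - w else ustar,
          fun t => if t = 0 then 0 else xb, rfl, ?_, ?_⟩
  · intro t
    cases t with
    | zero => simp
    | succ n => simp; linarith [hrec]
  · have hsum : ∑ t ∈ Finset.range (T + 1),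
        (q * (if t = 0 then (0:ℝ) else xb) ^ 2 + (if t = 0 then xb - w else ustar) ^ 2)
        = (xb - w) ^ 2 + T * (q * xb ^ 2 + ustar ^ 2) := by
      rw [Finset.sum_range_succ']
      simp [Finset.sum_const, mul_comm]
      ring
    have hval : q * xb ^ 2 + ustar ^ 2 = q / D * w ^ 2 := by
      have hxbval : xb = -w * (a - 1) / D := by
        rw [hxb, hustar]
        field_simp
        ring
      rw [hxbval, hustar]
      field_simp
      ring
    rw [hsum, hval, hc1, hxb]
    have : (0:ℝ) ≤ q / D * w ^ 2 := by positivity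
    nlinarith [this]
end

section
/- Let a > 1, q > 0, T ≥ 1, and let w : ℕ → ℝ be any disturbance sequence. For any k ∈ ℝ with |a − k| < 1, let cost(LC) := Σ_{t=0}^T (q + k²)·x_t² be the cost of the linear controller u_t = −k·x_t (with x_0 = 0, x_{t+1} = (a − k)·x_t + w_t), and let cost(OPT) := inf over all control sequences u_0, …, u_T of Σ_{t=0}^T (q·x_t² + u_t²) subject to x_0 = 0 and x_{t+1} = a·x_t + u_t + w_t. Then cost(LC) ≥ ((q + (a − 1)²)/4) · cost(OPT). -/
/-- the cost of any stabilizing linear controller is at least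
`(q + (a − 1)²)/4` times the offline optimal cost. -/
theorem stmt19 (a q k : ℝ) (ha : 1 < a) (hq : 0 < q) (hk : |a - k| < 1)
    (T : ℕ) (hT : 1 ≤ T) (w : ℕ → ℝ)
    (x : ℕ → ℝ) (hx0 : x 0 = 0) (hxrec : ∀ t : ℕ, x (t + 1) = (a - k) * x t + w t)
    (costLC : ℝ)
    (hLC : costLC = ∑ t ∈ Finset.range (T + 1), (q + k ^ 2) * x t ^ 2)
    (costOPT : ℝ)
    (hOPT : costOPT = sInf { r : ℝ | ∃ u x' : ℕ → ℝ, x' 0 = 0 ∧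
      (∀ t : ℕ, x' (t + 1) = a * x' t + u t + w t) ∧
      r = ∑ t ∈ Finset.range (T + 1), (q * x' t ^ 2 + u t ^ 2) }) :
    costLC ≥ (q + (a - 1) ^ 2) / 4 * costOPT := by
  set Sset := { r : ℝ | ∃ u x' : ℕ → ℝ, x' 0 = 0 ∧
      (∀ t : ℕ, x' (t + 1) = a * x' t + u t + w t) ∧
      r = ∑ t ∈ Finset.range (T + 1), (q * x' t ^ 2 + u t ^ 2) } with hSset
  -- explicit feasible control: cancel disturbances up to time T
  set u : ℕ → ℝ := fun t => if t < T then -w t else 0 with hu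
  set x' : ℕ → ℝ := fun n => Nat.rec (0 : ℝ) (fun t xt => a * xt + u t + w t) n with hx'
  have hx'0 : x' 0 = 0 := rfl
  have hx'rec : ∀ t : ℕ, x' (t + 1) = a * x' t + u t + w t := fun t => rfl
  have hx'zero : ∀ t, t ≤ T → x' t = 0 := by
    intro t
    induction t with
    | zero => intro _; rfl
    | succ n ih =>
      intro h
      have hn : n < T := Nat.lt_of_succ_le h
      rw [hx'rec n, ih (le_of_lt hn), hu]
      simp [hn]
  have hr0 : (∑ t ∈ Finset.range T, w t ^ 2) ∈ Sset := by
    refine ⟨u, x', hx'0, hx'rec, ?_⟩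
    rw [Finset.sum_range_succ]
    have h1 : ∀ t ∈ Finset.range T, q * x' t ^ 2 + u t ^ 2 = w t ^ 2 := by
      intro t ht
      rw [Finset.mem_range] at ht
      rw [hx'zero t (le_of_lt ht), hu]
      simp [ht]
    rw [Finset.sum_congr rfl h1, hx'zero T le_rfl, hu]
    simp
  have hbdd : BddBelow Sset := by
    refine ⟨0, ?_⟩
    rintro r ⟨u0, x0, -, -, rfl⟩
    exact Finset.sum_nonneg fun t _ => by positivity
  have hOPTle : costOPT ≤ ∑ t ∈ Finset.range T, w t ^ 2 := by
    rw [hOPT]; exact csInf_le hbdd hr0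
  set S := ∑ t ∈ Finset.range (T + 1), x t ^ 2 with hS
  have hSnonneg : 0 ≤ S := Finset.sum_nonneg fun t _ => sq_nonneg _
  have hak : (a - k) ^ 2 ≤ 1 := by
    have := abs_nonneg (a - k)
    nlinarith [sq_abs (a - k)]
  -- bound the disturbance energy by the LC state energy
  have hwb : ∀ t, w t ^ 2 ≤ 2 * x (t + 1) ^ 2 + 2 * x t ^ 2 := by
    intro t
    have hw : w t = x (t + 1) - (a - k) * x t := by rw [hxrec t]; ring
    rw [hw]
    nlinarith [sq_nonneg (x (t + 1) + (a - k) * x t), mul_le_mul_of_nonneg_right hak (sq_nonneg (x t))]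
  have hsum : (∑ t ∈ Finset.range T, w t ^ 2) ≤ 4 * S := by
    have h1 : (∑ t ∈ Finset.range T, w t ^ 2) ≤
        ∑ t ∈ Finset.range T, (2 * x (t + 1) ^ 2 + 2 * x t ^ 2) :=
      Finset.sum_le_sum fun t _ => hwb t
    have h2 : (∑ t ∈ Finset.range T, x (t + 1) ^ 2) ≤ S := by
      have := Finset.sum_range_succ' (fun t => x t ^ 2) T
      rw [hS, this, hx0]
      simp
    have h3 : (∑ t ∈ Finset.range T, x t ^ 2) ≤ S := by
      rw [hS, Finset.sum_range_succ]
      nlinarith [sq_nonneg (x T)]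
    rw [Finset.sum_add_distrib, ← Finset.mul_sum, ← Finset.mul_sum] at h1
    nlinarith
  have hOPT4S : costOPT ≤ 4 * S := le_trans hOPTle hsum
  have hka : (a - 1) ^ 2 ≤ k ^ 2 := by
    have h1 : a - k < 1 := lt_of_abs_lt hk
    have h2 : -(1:ℝ) < a - k := neg_lt_of_abs_lt hk
    nlinarith
  have hcpos : (0:ℝ) ≤ (q + (a - 1) ^ 2) / 4 := by positivity
  have hLCS : costLC = (q + k ^ 2) * S := by
    rw [hLC, hS, Finset.mul_sum]
  have h5 : (q + (a - 1) ^ 2) / 4 * costOPT ≤ (q + (a - 1) ^ 2) / 4 * (4 * S) :=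
    mul_le_mul_of_nonneg_left hOPT4S hcpos
  rw [hLCS]
  nlinarith
end
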